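/- arXiv:1410.2385 — 3 statements merged into one kernel-verified Lean document; each statement's English description precedes it below -/
import Mathlib

section
/- For every integer s and every ω ∈ ℂ with ω ∉ i(-∞, -1/√(2c)], ω ∉ i[1/√(2c), ∞) and ω ≠ 0, the denominator 1 + a^2 + a(iω/√(2c))(u + 1/u) does not vanish for |u| = 1, and the contour integral F_s(iω/√(2c)) := (2πi)^{-1} ∮_{|u|=1} u^{s} / ((1 + a^2 + a(iω/√(2c))(u + 1/u))·u) du over the positively oriented unit circle satisfies F_s(iω/√(2c)) = i^{|s|} · G(1/ω)^{|s|} / ((1+a^2) · ω · √(ω^{-2}+2c)). -/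
/-- `c = a/(1+a²)`. -/
noncomputable def cOf (a : ℝ) : ℝ := a / (1 + a ^ 2)

/-- The branch of the logarithm with argument in `(-π/2, 3π/2]`:
`L(z) = Log(-iz) + iπ/2` where `Log` is the principal branch. -/
noncomputable def Lbr (z : ℂ) : ℂ :=
  Complex.log (-Complex.I * z) + Complex.I * ((Real.pi : ℂ) / 2)

/-- The branch `√(ω² + 2c) = exp((1/2)L(ω + i√(2c)) + (1/2)L(ω - i√(2c)))`. -/
noncomputable def sqBr (a : ℝ) (ω : ℂ) : ℂ :=
  Complex.exp ((1 / 2 : ℂ) * Lbr (ω + Complex.I * (Real.sqrt (2 * cOf a) : ℂ)) +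
    (1 / 2 : ℂ) * Lbr (ω - Complex.I * (Real.sqrt (2 * cOf a) : ℂ)))

/-- `G(ω) = (ω - √(ω² + 2c))/√(2c)`. -/
noncomputable def Gbr (a : ℝ) (ω : ℂ) : ℂ :=
  (ω - sqBr a ω) / (Real.sqrt (2 * cOf a) : ℂ)

/-- The branch cuts `𝒞 = i·((-∞, -1/√(2c)] ∪ [-√(2c), √(2c)] ∪ [1/√(2c), ∞))`. -/
def cuts (a : ℝ) : Set ℂ :=
  {z : ℂ | ∃ t : ℝ, z = Complex.I * (t : ℂ) ∧
    (t ≤ -(1 / Real.sqrt (2 * cOf a)) ∨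
      (-Real.sqrt (2 * cOf a) ≤ t ∧ t ≤ Real.sqrt (2 * cOf a)) ∨
      1 / Real.sqrt (2 * cOf a) ≤ t)}



section StmtZeroAux
open Complex Metric Set

lemma exp_Lbr {z : ℂ} (hz : z ≠ 0) : Complex.exp (Lbr z) = z := by
  have h : (-Complex.I * z) ≠ 0 := by simp [hz, Complex.I_ne_zero]
  rw [Lbr, Complex.exp_add, Complex.exp_log h]
  have h2 : Complex.exp (Complex.I * ((Real.pi : ℂ) / 2)) = Complex.I := by
    rw [mul_comm, Complex.exp_mul_I]
    simp [Complex.cos_pi_div_two, Complex.sin_pi_div_two]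
  rw [h2]
  linear_combination (-z) * Complex.I_sq


lemma abs_arg_sub_lt_pi {μ : ℂ} {σ : ℝ} (hσ : 0 < σ)
    (h : μ.im ≠ 0 ∨ σ < |μ.re|) :
    |Complex.arg (μ - (σ:ℂ)) - Complex.arg (μ + (σ:ℂ))| < Real.pi := by
  have him1 : (μ - (σ:ℂ)).im = μ.im := by simp
  have him2 : (μ + (σ:ℂ)).im = μ.im := by simp
  by_cases him : μ.im = 0
  · have hre : σ < |μ.re| := by
      rcases h with h | h
      · exact absurd him h
      · exact h
    have hμ : μ = ((μ.re : ℝ) : ℂ) := by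
      apply Complex.ext <;> simp [him]
    rcases lt_abs.mp hre with hpos | hneg
    · have e1 : Complex.arg (μ - (σ:ℂ)) = 0 := by
        rw [hμ, ← Complex.ofReal_sub]
        exact Complex.arg_ofReal_of_nonneg (by linarith)
      have e2 : Complex.arg (μ + (σ:ℂ)) = 0 := by
        rw [hμ, ← Complex.ofReal_add]
        exact Complex.arg_ofReal_of_nonneg (by linarith)
      simp [e1, e2, Real.pi_pos]
    · -- σ < -μ.re
      have e1 : Complex.arg (μ - (σ:ℂ)) = Real.pi := by
        rw [hμ, ← Complex.ofReal_sub]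
        exact Complex.arg_ofReal_of_neg (by linarith)
      have e2 : Complex.arg (μ + (σ:ℂ)) = Real.pi := by
        rw [hμ, ← Complex.ofReal_add]
        exact Complex.arg_ofReal_of_neg (by linarith)
      simp [e1, e2, Real.pi_pos]
  · rcases lt_or_gt_of_ne him with hlt | hgt
    · have a1 : Complex.arg (μ - (σ:ℂ)) < 0 := Complex.arg_neg_iff.mpr (by rw [him1]; exact hlt)
      have a2 : Complex.arg (μ + (σ:ℂ)) < 0 := Complex.arg_neg_iff.mpr (by rw [him2]; exact hlt)
      have b1 := Complex.neg_pi_lt_arg (μ - (σ:ℂ))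
      have b2 := Complex.neg_pi_lt_arg (μ + (σ:ℂ))
      rw [abs_lt]; constructor <;> linarith
    · have a1 : 0 ≤ Complex.arg (μ - (σ:ℂ)) := Complex.arg_nonneg_iff.mpr (by rw [him1]; exact hgt.le)
      have a2 : 0 ≤ Complex.arg (μ + (σ:ℂ)) := Complex.arg_nonneg_iff.mpr (by rw [him2]; exact hgt.le)
      have b1 : Complex.arg (μ - (σ:ℂ)) < Real.pi := by
        rcases (Complex.arg_le_pi _).lt_or_eq with h' | h'
        · exact h'
        · exact absurd (Complex.arg_eq_pi_iff.mp h').2 (by rw [him1]; exact ne_of_gt hgt)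
      have b2 : Complex.arg (μ + (σ:ℂ)) < Real.pi := by
        rcases (Complex.arg_le_pi _).lt_or_eq with h' | h'
        · exact h'
        · exact absurd (Complex.arg_eq_pi_iff.mp h').2 (by rw [him2]; exact ne_of_gt hgt)
      rw [abs_lt]; constructor <;> linarith


lemma re_conj_mul_S_pos {ν : ℂ} {σ : ℝ} (hσ : 0 < σ)
    (hz : ν + Complex.I * (σ:ℂ) ≠ 0) (hw : ν - Complex.I * (σ:ℂ) ≠ 0)
    (h : ν.re ≠ 0 ∨ σ < |ν.im|) :
    0 < ((starRingEnd ℂ) ν *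
      Complex.exp ((1/2:ℂ) * Lbr (ν + Complex.I * (σ:ℂ)) +
        (1/2:ℂ) * Lbr (ν - Complex.I * (σ:ℂ)))).re := by
  set z := ν + Complex.I * (σ:ℂ) with hzdef
  set w := ν - Complex.I * (σ:ℂ) with hwdef
  set t := (1/2:ℂ) * Lbr z + (1/2:ℂ) * Lbr w with htdef
  -- the half-angle
  set d : ℝ := ((Lbr w).im - (Lbr z).im) / 2 with hddef
  -- cos d > 0
  have hcd : 0 < Real.cos d := by
    have harg : |Complex.arg ((-Complex.I * ν) - (σ:ℂ)) - Complex.arg ((-Complex.I * ν) + (σ:ℂ))| < Real.pi := by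
      apply abs_arg_sub_lt_pi hσ
      rcases h with h | h
      · left; simp [h]
      · right; simpa using h
    have him : d = (Complex.arg (-Complex.I * w) - Complex.arg (-Complex.I * z)) / 2 := by
      simp [hddef, Lbr, Complex.log_im]
    have e1 : -Complex.I * w = (-Complex.I * ν) - (σ:ℂ) := by
      rw [hwdef]; ring_nf; linear_combination (σ:ℂ) * Complex.I_sq
    have e2 : -Complex.I * z = (-Complex.I * ν) + (σ:ℂ) := by
      rw [hzdef]; ring_nf; linear_combination (-(σ:ℂ)) * Complex.I_sq
    rw [him, e1, e2]
    apply Real.cos_pos_of_mem_Ioo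
    constructor
    · rw [abs_lt] at harg; linarith [harg.1]
    · rw [abs_lt] at harg; linarith [harg.2]
  -- decompose conj ν
  have hzw : (starRingEnd ℂ) z + (starRingEnd ℂ) w = 2 * (starRingEnd ℂ) ν := by
    rw [← map_add]
    have : z + w = 2 * ν := by rw [hzdef, hwdef]; ring
    rw [this, map_mul, Complex.conj_ofNat]
  have ez : Complex.exp ((starRingEnd ℂ) (Lbr z)) = (starRingEnd ℂ) z := by
    rw [Complex.exp_conj, exp_Lbr hz]
  have ew : Complex.exp ((starRingEnd ℂ) (Lbr w)) = (starRingEnd ℂ) w := by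
    rw [Complex.exp_conj, exp_Lbr hw]
  have czs : (starRingEnd ℂ) z * Complex.exp t = Complex.exp ((starRingEnd ℂ) (Lbr z) + t) := by
    rw [← ez, ← Complex.exp_add]
  have cws : (starRingEnd ℂ) w * Complex.exp t = Complex.exp ((starRingEnd ℂ) (Lbr w) + t) := by
    rw [← ew, ← Complex.exp_add]
  have him1 : ((starRingEnd ℂ) (Lbr z) + t).im = d := by
    simp [htdef, hddef, Complex.add_im, Complex.mul_im, Complex.conj_im]
    ring
  have him2 : ((starRingEnd ℂ) (Lbr w) + t).im = -d := by
    simp [htdef, hddef, Complex.add_im, Complex.mul_im, Complex.conj_im]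
    ring
  have hmain : (2:ℂ) * ((starRingEnd ℂ) ν * Complex.exp t) =
      Complex.exp ((starRingEnd ℂ) (Lbr z) + t) + Complex.exp ((starRingEnd ℂ) (Lbr w) + t) := by
    rw [← czs, ← cws, ← add_mul, hzw]; ring
  have hre : 2 * ((starRingEnd ℂ) ν * Complex.exp t).re =
      Real.exp (((starRingEnd ℂ) (Lbr z) + t).re) * Real.cos d +
      Real.exp (((starRingEnd ℂ) (Lbr w) + t).re) * Real.cos (-d) := by
    have := congrArg Complex.re hmain
    simpa [Complex.mul_re, Complex.add_re, Complex.exp_re, him1, him2] using this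
  rw [Real.cos_neg] at hre
  nlinarith [Real.exp_pos (((starRingEnd ℂ) (Lbr z) + t).re), Real.exp_pos (((starRingEnd ℂ) (Lbr w) + t).re), hcd]

/-- Cauchy evaluation of the model integral. -/
lemma key_integral (A u₁ u₂ : ℂ) (hA : A ≠ 0) (h1 : ‖u₁‖ < 1)
    (h2 : 1 < ‖u₂‖) (n : ℕ) :
    (∮ u in C(0, 1), u ^ n / (A * (u - u₁) * (u - u₂))) =
      2 * Real.pi * Complex.I * (u₁ ^ n / (A * (u₁ - u₂))) := by
  set h : ℂ → ℂ := fun u => u ^ n / (A * (u - u₂)) with hh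
  have hd : DifferentiableOn ℂ h (closedBall 0 1) := by
    apply DifferentiableOn.div
    · exact (differentiable_pow n).differentiableOn
    · exact (differentiable_const A |>.mul ((differentiable_id).sub_const u₂)).differentiableOn
    · intro u hu
      have h3 : ‖u‖ ≤ 1 := by
        simpa using mem_closedBall_zero_iff.mp hu
      have : u ≠ u₂ := fun h => by rw [h] at h3; linarith
      simp [sub_ne_zero.mpr this, hA]
  have hmem : u₁ ∈ ball (0:ℂ) 1 := by
    rw [mem_ball_zero_iff]; exact h1
  have hcau := hd.circleIntegral_sub_inv_smul hmem
  have heq : (∮ u in C(0, 1), u ^ n / (A * (u - u₁) * (u - u₂))) =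
      ∮ u in C(0, 1), (u - u₁)⁻¹ • h u := by
    apply circleIntegral.integral_congr zero_le_one
    intro u _
    simp only [smul_eq_mul, hh]
    simp only [div_eq_mul_inv, mul_inv]
    ring
  rw [heq, hcau]
  simp only [smul_eq_mul, hh]

lemma circleMap_neg_theta (θ : ℝ) : circleMap 0 1 (-θ) = (circleMap 0 1 θ)⁻¹ := by
  simp [circleMap, ← Complex.exp_neg]

lemma circleIntegral_comp_inv (f g : ℂ → ℂ)
    (h : ∀ θ : ℝ, (circleMap 0 1 (-θ) * Complex.I) * f (circleMap 0 1 (-θ))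
        = (circleMap 0 1 θ * Complex.I) * g (circleMap 0 1 θ)) :
    (∮ u in C(0, 1), f u) = ∮ u in C(0, 1), g u := by
  rw [circleIntegral, circleIntegral]
  simp only [deriv_circleMap, smul_eq_mul]
  set F := fun θ : ℝ => circleMap 0 1 θ * Complex.I * f (circleMap 0 1 θ) with hF
  have hper : Function.Periodic F (2 * Real.pi) := by
    intro θ
    simp only [hF, periodic_circleMap 0 1 θ]
  have h1 : (∫ θ in (0:ℝ)..(2 * Real.pi), circleMap 0 1 θ * Complex.I * g (circleMap 0 1 θ)) =
      ∫ θ in (0:ℝ)..(2 * Real.pi), F (-θ) := by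
    apply intervalIntegral.integral_congr
    intro θ _
    exact (h θ).symm
  have h2 : (∫ θ in (0:ℝ)..(2 * Real.pi), F (-θ)) =
      ∫ θ in (-(2 * Real.pi))..(0:ℝ), F θ := by
    simpa using intervalIntegral.integral_comp_neg (a := 0) (b := 2 * Real.pi) (f := F)
  have h3 : (∫ θ in (-(2 * Real.pi))..(0:ℝ), F θ) = ∫ θ in (0:ℝ)..(2 * Real.pi), F θ := by
    have := hper.intervalIntegral_add_eq (-(2 * Real.pi)) 0
    norm_num at this
    convert this using 2 <;> ring
  rw [h1, h2, h3]

end StmtZeroAux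

/-- For every integer `s` and every `ω ∈ ℂ` with
`ω ∉ i(-∞, -1/√(2c)]`, `ω ∉ i[1/√(2c), ∞)` and `ω ≠ 0`, the denominator
`1 + a² + a(iω/√(2c))(u + 1/u)` does not vanish for `|u| = 1`, and
`F_s(iω/√(2c)) := (2πi)⁻¹ ∮_{|u|=1} u^s / ((1 + a² + a(iω/√(2c))(u + 1/u))·u) du`
satisfies `F_s(iω/√(2c)) = i^{|s|}·G(1/ω)^{|s|} / ((1+a²)·ω·√(ω⁻²+2c))`. -/
theorem statement0 (a : ℝ) (ha0 : 0 < a) (ha1 : a < 1) (s : ℤ) (ω : ℂ)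
    (hω1 : ¬ ∃ t : ℝ, t ≤ -(1 / Real.sqrt (2 * cOf a)) ∧ ω = Complex.I * (t : ℂ))
    (hω2 : ¬ ∃ t : ℝ, 1 / Real.sqrt (2 * cOf a) ≤ t ∧ ω = Complex.I * (t : ℂ))
    (hω0 : ω ≠ 0) :
    (∀ u : ℂ, ‖u‖ = 1 →
      1 + (a : ℂ) ^ 2 +
        (a : ℂ) * (Complex.I * ω / (Real.sqrt (2 * cOf a) : ℂ)) * (u + u⁻¹) ≠ 0) ∧
    (2 * (Real.pi : ℂ) * Complex.I)⁻¹ *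
        (∮ u in C(0, 1), u ^ s /
          ((1 + (a : ℂ) ^ 2 +
            (a : ℂ) * (Complex.I * ω / (Real.sqrt (2 * cOf a) : ℂ)) * (u + u⁻¹)) * u)) =
      Complex.I ^ s.natAbs * Gbr a ω⁻¹ ^ s.natAbs /
        ((1 + (a : ℂ) ^ 2) * ω * sqBr a ω⁻¹) := by
  have hc0 : 0 < cOf a := div_pos ha0 (by positivity)
  have h2c : 0 < 2 * cOf a := by linarith
  set σr : ℝ := Real.sqrt (2 * cOf a) with hσrdef
  have hσpos : 0 < σr := Real.sqrt_pos.mpr h2c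
  have hσne : (σr : ℂ) ≠ 0 := by exact_mod_cast hσpos.ne'
  have hσsq : (σr : ℂ) ^ 2 = ((2 * cOf a : ℝ) : ℂ) := by
    rw [← Complex.ofReal_pow, Real.sq_sqrt h2c.le]
  have haC : (a : ℂ) ≠ 0 := by exact_mod_cast ha0.ne'
  have h1a2R : (0:ℝ) < 1 + a ^ 2 := by positivity
  have h1a2 : (1 : ℂ) + (a : ℂ) ^ 2 ≠ 0 := by
    intro h
    have : ((1 + a ^ 2 : ℝ) : ℂ) = 0 := by push_cast; linear_combination h
    exact h1a2R.ne' (by exact_mod_cast this)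
  have hac : (a : ℂ) = ((cOf a : ℝ) : ℂ) * (1 + (a : ℂ) ^ 2) := by
    have : (cOf a : ℝ) * (1 + a ^ 2) = a := by
      rw [cOf]; field_simp
    calc (a : ℂ) = ((cOf a * (1 + a ^ 2) : ℝ) : ℂ) := by rw [this]
      _ = ((cOf a : ℝ) : ℂ) * (1 + (a : ℂ) ^ 2) := by push_cast; ring
  set ν : ℂ := ω⁻¹ with hνdef
  have hν0 : ν ≠ 0 := inv_ne_zero hω0
  have hων : ω * ν = 1 := mul_inv_cancel₀ hω0
  -- z and w nonzero
  have hz : ν + Complex.I * (σr : ℂ) ≠ 0 := by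
    intro hzz
    apply hω2
    refine ⟨1 / σr, le_refl _, ?_⟩
    have hνval : ν = -(Complex.I * (σr : ℂ)) := by linear_combination hzz
    have hprod : -(Complex.I * (σr : ℂ)) * (Complex.I * ((1 / σr : ℝ) : ℂ)) = 1 := by
      push_cast
      field_simp
      linear_combination (-1:ℂ) * Complex.I_sq
    rw [← inv_inv ω, ← hνdef, hνval, inv_eq_of_mul_eq_one_right hprod]
  have hw : ν - Complex.I * (σr : ℂ) ≠ 0 := by
    intro hzz
    apply hω1
    refine ⟨-(1 / σr), le_refl _, ?_⟩
    have hνval : ν = Complex.I * (σr : ℂ) := by linear_combination hzz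
    have hprod : (Complex.I * (σr : ℂ)) * (Complex.I * ((-(1 / σr) : ℝ) : ℂ)) = 1 := by
      push_cast
      field_simp
      linear_combination (-1:ℂ) * Complex.I_sq
    rw [← inv_inv ω, ← hνdef, hνval, inv_eq_of_mul_eq_one_right hprod]
  set S : ℂ := sqBr a ν with hSdef
  have hS0 : S ≠ 0 := Complex.exp_ne_zero _
  have hS2 : S ^ 2 = ν ^ 2 + (σr : ℂ) ^ 2 := by
    rw [hSdef, sqBr, ← hσrdef, sq, ← Complex.exp_add]
    have e : (1 / 2 : ℂ) * Lbr (ν + Complex.I * (σr:ℂ)) + (1 / 2 : ℂ) * Lbr (ν - Complex.I * (σr:ℂ)) +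
        ((1 / 2 : ℂ) * Lbr (ν + Complex.I * (σr:ℂ)) + (1 / 2 : ℂ) * Lbr (ν - Complex.I * (σr:ℂ))) =
        Lbr (ν + Complex.I * (σr:ℂ)) + Lbr (ν - Complex.I * (σr:ℂ)) := by ring
    rw [e, Complex.exp_add, exp_Lbr hz, exp_Lbr hw]
    linear_combination (-(σr:ℂ)^2) * Complex.I_sq
  set gg : ℂ := Gbr a ν with hgdef
  have hgval : (σr : ℂ) * gg = ν - S := by
    rw [hgdef, Gbr, ← hσrdef, ← hSdef]
    field_simp
  have hprod2 : (ν - S) * (ν + S) = -(σr : ℂ) ^ 2 := by linear_combination -hS2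
  have hgne : ν - S ≠ 0 := by
    intro h0
    rw [h0, zero_mul] at hprod2
    exact hσne (by simpa [pow_eq_zero_iff] using congrArg Neg.neg hprod2.symm)
  have hg0 : gg ≠ 0 := by
    intro h0
    rw [h0, mul_zero] at hgval
    exact hgne hgval.symm
  have hginvmul : gg * (-(ν + S)) = (σr : ℂ) := by
    have h5 : (σr : ℂ) * (gg * (-(ν + S))) = (σr : ℂ) * (σr : ℂ) := by
      calc (σr : ℂ) * (gg * (-(ν + S))) = ((σr : ℂ) * gg) * (-(ν + S)) := by ring
        _ = (ν - S) * (-(ν + S)) := by rw [hgval]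
        _ = (σr : ℂ) ^ 2 := by linear_combination -hprod2
        _ = (σr : ℂ) * (σr : ℂ) := sq (σr:ℂ) ▸ by ring
    exact mul_left_cancel₀ hσne h5
  -- |gg| < 1
  have hre : 0 < ((starRingEnd ℂ) ν * S).re := by
    rw [hSdef, sqBr, ← hσrdef]
    apply re_conj_mul_S_pos hσpos hz hw
    by_cases hνre : ν.re = 0
    · right
      set y := ν.im with hy
      have hy0 : y ≠ 0 := by
        intro h0
        exact hν0 (Complex.ext hνre h0)
      have hνI : ν = Complex.I * (y : ℂ) := by
        apply Complex.ext <;> simp [hνre, hy]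
      have hyC : (y : ℂ) ≠ 0 := by exact_mod_cast hy0
      have hprod : (Complex.I * (y : ℂ)) * (Complex.I * ((-1 / y : ℝ) : ℂ)) = 1 := by
        push_cast
        field_simp
        linear_combination (-1:ℂ) * Complex.I_sq
      have hων' : ω = Complex.I * ((-1 / y : ℝ) : ℂ) := by
        rw [← inv_inv ω, ← hνdef, hνI, inv_eq_of_mul_eq_one_right hprod]
      have hn1 : ¬ (-1 / y ≤ -(1 / σr)) := fun hle => hω1 ⟨-1 / y, hle, hων'⟩
      have hn2 : ¬ (1 / σr ≤ -1 / y) := fun hle => hω2 ⟨-1 / y, hle, hων'⟩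
      push_neg at hn1 hn2
      have habs : |(-1 / y)| < 1 / σr := abs_lt.mpr ⟨by linarith, hn2⟩
      have habs2 : 1 / |y| < 1 / σr := by
        rwa [abs_div, abs_neg, abs_one] at habs
      have h1 : 0 < |y| := abs_pos.mpr hy0
      rw [div_lt_div_iff₀ h1 hσpos] at habs2
      linarith
    · left; exact hνre
  have hlt : ‖ν - S‖ < ‖ν + S‖ := by
    have e1 := Complex.normSq_sub ν S
    have e2 := Complex.normSq_add ν S
    have hxre : 0 < (ν * (starRingEnd ℂ) S).re := by
      have : (ν * (starRingEnd ℂ) S) = (starRingEnd ℂ) ((starRingEnd ℂ) ν * S) := by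
        rw [map_mul]; simp
      rw [this, Complex.conj_re]; exact hre
    have hnsq : Complex.normSq (ν - S) < Complex.normSq (ν + S) := by
      rw [e1, e2]; linarith
    rw [Complex.norm_def, Complex.norm_def]
    exact Real.sqrt_lt_sqrt (Complex.normSq_nonneg _) hnsq
  have habs1 : ‖ν - S‖ * ‖ν + S‖ = σr ^ 2 := by
    rw [← norm_mul, hprod2, norm_neg, ← Complex.ofReal_pow, Complex.norm_real, Real.norm_eq_abs,
      abs_of_pos (by positivity)]
  have habsσ : ‖ν - S‖ < σr := by
    have hx : 0 < ‖ν - S‖ := norm_pos_iff.mpr hgne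
    have : ‖ν - S‖ ^ 2 < σr ^ 2 := by
      calc ‖ν - S‖ ^ 2 = ‖ν - S‖ * ‖ν - S‖ := sq _
        _ < ‖ν - S‖ * ‖ν + S‖ := by
            exact mul_lt_mul_of_pos_left hlt hx
        _ = σr ^ 2 := habs1
    exact lt_of_pow_lt_pow_left₀ 2 hσpos.le this
  have hgabs : ‖gg‖ < 1 := by
    have e : ‖gg‖ = ‖ν - S‖ / σr := by
      rw [hgdef, Gbr, ← hσrdef, ← hSdef, norm_div, Complex.norm_real, Real.norm_eq_abs, abs_of_pos hσpos]
    rw [e, div_lt_one hσpos]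
    exact habsσ
  -- roots and Vieta
  have hσsq' : (σr : ℂ) ^ 2 = 2 * ((cOf a : ℝ) : ℂ) := by rw [hσsq]; push_cast; ring
  set lam : ℂ := Complex.I * ω / (σr : ℂ) with hlamdef
  set A : ℂ := (a : ℂ) * lam with hAdef
  have hA0 : A ≠ 0 :=
    mul_ne_zero haC (div_ne_zero (mul_ne_zero Complex.I_ne_zero hω0) hσne)
  set u₁ : ℂ := Complex.I * gg with hu₁def
  set u₂ : ℂ := u₁⁻¹ with hu₂def
  have hu₁0 : u₁ ≠ 0 := mul_ne_zero Complex.I_ne_zero hg0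
  have hu₁u₂ : u₁ * u₂ = 1 := mul_inv_cancel₀ hu₁0
  have hu₁abs : ‖u₁‖ < 1 := by
    rw [hu₁def, norm_mul, Complex.norm_I, one_mul]; exact hgabs
  have hu₂abs : 1 < ‖u₂‖ := by
    have h01 : 0 < ‖u₁‖ := norm_pos_iff.mpr hu₁0
    rw [hu₂def, norm_inv]
    nlinarith [mul_inv_cancel₀ h01.ne', inv_pos.mpr h01]
  have hu₁val : u₁ = Complex.I * (ν - S) / (σr : ℂ) := by
    rw [hu₁def, ← hgval]; field_simp
  have hginv : gg⁻¹ = -(ν + S) / (σr : ℂ) := by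
    rw [eq_div_iff hσne]
    calc gg⁻¹ * (σr : ℂ) = gg⁻¹ * (gg * -(ν + S)) := by rw [hginvmul]
      _ = -(ν + S) := by field_simp
  have hu₂val : u₂ = Complex.I * (ν + S) / (σr : ℂ) := by
    rw [hu₂def, hu₁def, mul_inv, Complex.inv_I, hginv]; ring
  have hsum : u₁ + u₂ = Complex.I * (2 * ν) / (σr : ℂ) := by
    rw [hu₁val, hu₂val]; ring
  have hdiff : u₁ - u₂ = Complex.I * (-2 * S) / (σr : ℂ) := by
    rw [hu₁val, hu₂val]; ring
  have hkey1 : A * (u₁ + u₂) = -(1 + (a : ℂ) ^ 2) := by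
    rw [hsum, hAdef, hlamdef, mul_assoc, div_mul_div_comm, mul_comm]
    rw [div_mul_eq_mul_div, div_eq_iff (mul_ne_zero hσne hσne)]
    linear_combination (2 * (a:ℂ) * ω * ν) * Complex.I_sq + (-(2:ℂ) * (a:ℂ)) * hων +
      (1 + (a:ℂ)^2) * hσsq' + (-2:ℂ) * hac
  have hkey2 : A * (u₁ - u₂) = (1 + (a : ℂ) ^ 2) * ω * S := by
    rw [hdiff, hAdef, hlamdef, mul_assoc, div_mul_div_comm, mul_comm]
    rw [div_mul_eq_mul_div, div_eq_iff (mul_ne_zero hσne hσne)]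
    linear_combination (-(2:ℂ) * (a:ℂ) * ω * S) * Complex.I_sq +
      (-(1 + (a:ℂ)^2) * ω * S) * hσsq' + (2 * ω * S) * hac
  have hfactor : ∀ u : ℂ, u ≠ 0 →
      (1 + (a : ℂ) ^ 2 + A * (u + u⁻¹)) * u = A * (u - u₁) * (u - u₂) := by
    intro u hu
    have e : A * (u - u₁) * (u - u₂) = A * u ^ 2 - (A * (u₁ + u₂)) * u + A * (u₁ * u₂) := by
      ring
    rw [e, hkey1, hu₁u₂, mul_one]
    field_simp
    ring
  have part1 : ∀ u : ℂ, ‖u‖ = 1 →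
      1 + (a : ℂ) ^ 2 + A * (u + u⁻¹) ≠ 0 := by
    intro u hu habs0
    have hu0 : u ≠ 0 := by intro h0; rw [h0] at hu; simp at hu
    have h0 : A * (u - u₁) * (u - u₂) = 0 := by rw [← hfactor u hu0, habs0, zero_mul]
    rcases mul_eq_zero.mp h0 with h0 | h0
    · rcases mul_eq_zero.mp h0 with h0 | h0
      · exact hA0 h0
      · rw [sub_eq_zero] at h0
        rw [h0] at hu
        rw [hu] at hu₁abs
        linarith
    · rw [sub_eq_zero] at h0
      rw [h0] at hu
      rw [hu] at hu₂abs
      linarith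
  have main : ∀ n : ℕ,
      (2 * (Real.pi : ℂ) * Complex.I)⁻¹ *
          (∮ u in C(0, 1), u ^ ((n : ℤ)) / ((1 + (a : ℂ) ^ 2 + A * (u + u⁻¹)) * u)) =
        Complex.I ^ n * gg ^ n / ((1 + (a : ℂ) ^ 2) * ω * S) := by
    intro n
    have hcong : (∮ u in C(0, 1), u ^ ((n : ℤ)) / ((1 + (a : ℂ) ^ 2 + A * (u + u⁻¹)) * u)) =
        ∮ u in C(0, 1), u ^ n / (A * (u - u₁) * (u - u₂)) := by
      apply circleIntegral.integral_congr zero_le_one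
      intro u hu
      have hu1 : ‖u‖ = 1 := by
        have := mem_sphere_zero_iff_norm.mp hu
        simpa using this
      have hu0 : u ≠ 0 := by intro h0; rw [h0] at hu1; simp at hu1
      simp only [zpow_natCast]
      rw [hfactor u hu0]
    rw [hcong, key_integral A u₁ u₂ hA0 hu₁abs hu₂abs n,
      inv_mul_cancel_left₀ Complex.two_pi_I_ne_zero,
      show u₁ ^ n = Complex.I ^ n * gg ^ n from by rw [hu₁def, mul_pow], hkey2]
  obtain ⟨n, rfl | rfl⟩ : ∃ n : ℕ, s = (n : ℤ) ∨ s = -(n : ℤ) := ⟨s.natAbs, by omega⟩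
  · simp only [Int.natAbs_natCast]
    exact ⟨part1, main n⟩
  · simp only [Int.natAbs_neg, Int.natAbs_natCast]
    refine ⟨part1, ?_⟩
    have hsym : (∮ u in C(0, 1), u ^ (-(n : ℤ)) / ((1 + (a : ℂ) ^ 2 + A * (u + u⁻¹)) * u)) =
        ∮ u in C(0, 1), u ^ ((n : ℤ)) / ((1 + (a : ℂ) ^ 2 + A * (u + u⁻¹)) * u) := by
      apply circleIntegral_comp_inv
      intro θ
      set u : ℂ := circleMap 0 1 θ with hudef
      have hu0 : u ≠ 0 := circleMap_ne_center one_ne_zero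
      have hu1 : ‖u‖ = 1 := by
        rw [hudef]; simpa using norm_circleMap_zero 1 θ
      have hD : (1 + (a : ℂ) ^ 2 + A * (u + u⁻¹)) ≠ 0 := part1 u hu1
      rw [circleMap_neg_theta θ, ← hudef]
      have hzp : (u⁻¹) ^ (-(n : ℤ)) = u ^ ((n : ℤ)) := by
        rw [inv_zpow, ← zpow_neg, neg_neg]
      rw [inv_inv, hzp, add_comm (u⁻¹) u]
      generalize hDv : 1 + (a : ℂ) ^ 2 + A * (u + u⁻¹) = Dv at hD ⊢
      clear_value u
      field_simp [hu0]
    rw [hsym]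
    exact main n
end

section
/- Let -(1/2)√(1-2c) < ξ < 0 and suppose ω_c ∈ i·(√(2c), 1) satisfies g_ξ′(ω_c) = 0. Then g_ξ′(-1/ω_c) = 0; moreover the complex second derivative g_ξ″(ω_c) is a negative real number and g_ξ″(-1/ω_c) is a positive real number. -/
/-- The branch of the logarithm with argument in `(0, 2π]`: `L₃(z) = Log(-z) + iπ`. -/
noncomputable def L3 (z : ℂ) : ℂ := Complex.log (-z) + Complex.I * (Real.pi : ℂ)

/-- The saddle point function `g_ξ(ω) = L(ω) - ξ·L(G(ω)) + ξ·L₃(G(1/ω))`. -/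
noncomputable def gxi (a ξ : ℝ) (ω : ℂ) : ℂ :=
  Lbr ω - (ξ : ℂ) * Lbr (Gbr a ω) + (ξ : ℂ) * L3 (Gbr a ω⁻¹)

/-- The saddle point equation `1 + ξ₁·ω/√(ω²+2c) + ξ₂/(ω·√(ω⁻²+2c)) = 0`. -/
def saddleEq (a ξ₁ ξ₂ : ℝ) (ω : ℂ) : Prop :=
  1 + (ξ₁ : ℂ) * ω / sqBr a ω + (ξ₂ : ℂ) / (ω * sqBr a ω⁻¹) = 0

open Complex Topology Filter

namespace St7

lemma cOf_pos {a : ℝ} (ha0 : 0 < a) : 0 < cOf a := by unfold cOf; positivity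

lemma two_cOf_lt_one {a : ℝ} (ha0 : 0 < a) (ha1 : a < 1) : 2 * cOf a < 1 := by
  unfold cOf
  rw [mul_div_assoc']
  rw [div_lt_one (by positivity)]
  nlinarith [sq_nonneg (1 - a)]

noncomputable def Qf (a : ℝ) (ζ : ℂ) : ℂ :=
  ζ * Complex.exp ((1/2 : ℂ) * Complex.log (1 + ((2 * cOf a : ℝ) : ℂ) / ζ ^ 2))

lemma exp_I_pi_div_two : Complex.exp (I * ((Real.pi : ℂ)/2)) = I := by
  rw [show I * ((Real.pi : ℂ)/2) = (((Real.pi/2 : ℝ)):ℂ) * I by push_cast; ring,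
    Complex.exp_mul_I]
  rw [show (((Real.pi/2 : ℝ)):ℂ) = ((Real.pi/2 : ℝ):ℂ) from rfl]
  rw [← Complex.ofReal_cos, ← Complex.ofReal_sin]
  simp [Real.cos_pi_div_two, Real.sin_pi_div_two]

lemma sqBr_eq_Q_upper {a : ℝ} (ha0 : 0 < a) {ζ : ℂ}
    (hζ : Real.sqrt (2 * cOf a) < ζ.im) :
    sqBr a ζ = Qf a ζ := by
  set s : ℝ := Real.sqrt (2 * cOf a) with hs
  have hc0 : 0 < 2 * cOf a := by have := cOf_pos ha0; linarith
  have hs0 : 0 < s := Real.sqrt_pos.mpr hc0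
  have hssq : s^2 = 2 * cOf a := Real.sq_sqrt hc0.le
  set w0 : ℂ := -I * ζ with hw0
  have hw0re : w0.re = ζ.im := by simp [hw0]
  have hw0im : w0.im = -ζ.re := by simp [hw0]
  have h0 : 0 < w0.re := by rw [hw0re]; linarith
  have hw0ne : w0 ≠ 0 := by
    intro h; rw [h] at h0; simp at h0
  have hζne : ζ ≠ 0 := by
    intro h; rw [h] at hζ; simp at hζ; linarith
  set wA : ℂ := w0 + (s:ℂ) with hwA
  set wB : ℂ := w0 - (s:ℂ) with hwB
  have hAre : wA.re = w0.re + s := by simp [hwA]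
  have hAim : wA.im = w0.im := by simp [hwA]
  have hBre : wB.re = w0.re - s := by simp [hwB]
  have hBim : wB.im = w0.im := by simp [hwB]
  have hA : 0 < wA.re := by rw [hAre, hw0re]; linarith
  have hB : 0 < wB.re := by rw [hBre, hw0re]; linarith
  have hAne : wA ≠ 0 := by intro h; rw [h] at hA; simp at hA
  have hBne : wB ≠ 0 := by intro h; rw [h] at hB; simp at hB
  set p : ℂ := wA / w0 with hp
  set q : ℂ := wB / w0 with hq
  have hN : 0 < Complex.normSq w0 := Complex.normSq_pos.mpr hw0ne
  have hpre : 0 < p.re := by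
    rw [hp, Complex.div_re, hAre, hAim, Complex.normSq_apply]
    have h1 : 0 < (w0.re + s) * w0.re / (w0.re * w0.re + w0.im * w0.im) :=
      div_pos (mul_pos (by linarith) h0) (by rw [Complex.normSq_apply] at hN; exact hN)
    have h2 : 0 ≤ w0.im * w0.im / (w0.re * w0.re + w0.im * w0.im) :=
      div_nonneg (mul_self_nonneg _) (by rw [Complex.normSq_apply] at hN; exact hN.le)
    linarith
  have hqre : 0 < q.re := by
    rw [hq, Complex.div_re, hBre, hBim, Complex.normSq_apply, ← add_div]
    apply div_pos
    · nlinarith [hw0re, hζ, mul_self_nonneg w0.im]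
    · rw [Complex.normSq_apply] at hN; exact hN
  have hpne : p ≠ 0 := by intro h; rw [h] at hpre; simp at hpre
  have hqne : q ≠ 0 := by intro h; rw [h] at hqre; simp at hqre
  have hargp := Complex.abs_arg_lt_pi_div_two_iff.mpr (Or.inl hpre)
  have hargq := Complex.abs_arg_lt_pi_div_two_iff.mpr (Or.inl hqre)
  have hargw0 := Complex.abs_arg_lt_pi_div_two_iff.mpr (Or.inl h0)
  have hpi := Real.pi_pos
  have habs1 := abs_lt.mp hargp
  have habs2 := abs_lt.mp hargq
  have habs0 := abs_lt.mp hargw0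
  have h1 : Complex.log wA = Complex.log p + Complex.log w0 := by
    have hmul : p * w0 = wA := div_mul_cancel₀ _ hw0ne
    rw [← hmul]
    exact Complex.log_mul hpne hw0ne ⟨by linarith, by linarith⟩
  have h2 : Complex.log wB = Complex.log q + Complex.log w0 := by
    have hmul : q * w0 = wB := div_mul_cancel₀ _ hw0ne
    rw [← hmul]
    exact Complex.log_mul hqne hw0ne ⟨by linarith, by linarith⟩
  have h3 : Complex.log (p * q) = Complex.log p + Complex.log q :=
    Complex.log_mul hpne hqne ⟨by linarith, by linarith⟩
  have hw0sq : w0^2 = -ζ^2 := by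
    rw [hw0]; linear_combination (ζ^2) * Complex.I_mul_I
  have hpq : p * q = 1 + ((2 * cOf a : ℝ) : ℂ)/ζ^2 := by
    have hc : ((2 * cOf a : ℝ) : ℂ) = ((s:ℂ))^2 := by
      push_cast [← hssq]; ring
    rw [hp, hq, hc]
    rw [div_mul_div_comm]
    rw [show wA * wB = w0^2 - (s:ℂ)^2 by rw [hwA, hwB]; ring, hw0sq]
    rw [show w0 * w0 = w0^2 by ring, hw0sq]
    field_simp
    ring
  have hAeq : -I * (ζ + I * (s:ℂ)) = wA := by
    rw [hwA, hw0]; linear_combination (-(s:ℂ)) * Complex.I_mul_I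
  have hBeq : -I * (ζ - I * (s:ℂ)) = wB := by
    rw [hwB, hw0]; linear_combination ((s:ℂ)) * Complex.I_mul_I
  have hw0I : w0 * I = ζ := by
    rw [hw0]; linear_combination (-ζ) * Complex.I_mul_I
  rw [sqBr, Qf, Lbr, Lbr, ← hs, hAeq, hBeq]
  rw [show (1/2 : ℂ) * (Complex.log wA + I * ((Real.pi:ℂ)/2)) +
      (1/2 : ℂ) * (Complex.log wB + I * ((Real.pi:ℂ)/2)) =
      (1/2 : ℂ) * Complex.log wA + (1/2:ℂ) * Complex.log wB + I * ((Real.pi:ℂ)/2) by ring]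
  rw [h1, h2, ← hpq, h3]
  rw [show (1/2:ℂ) * (Complex.log p + Complex.log w0) +
      (1/2:ℂ) * (Complex.log q + Complex.log w0) + I * ((Real.pi:ℂ)/2) =
      ((1/2:ℂ) * (Complex.log p + Complex.log q)) + Complex.log w0 + I * ((Real.pi:ℂ)/2)
      by ring]
  rw [Complex.exp_add, Complex.exp_add, Complex.exp_log hw0ne, exp_I_pi_div_two]
  rw [← hw0I]
  ring


lemma log_neg_of_im_neg' {w : ℂ} (him : w.im < 0) :
    Complex.log (-w) = Complex.log w + Real.pi * I := by
  have hw : w ≠ 0 := by intro h; simp [h] at him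
  rw [Complex.log, Complex.log, norm_neg, arg_neg_eq_arg_add_pi_of_im_neg him]
  push_cast; ring

lemma log_neg_of_re_neg_im_nonneg {w : ℂ} (hre : w.re < 0) (him : 0 ≤ w.im) :
    Complex.log (-w) = Complex.log w - Real.pi * I := by
  have hw : w ≠ 0 := by intro h; simp [h] at hre
  rcases lt_or_eq_of_le him with him' | him'
  · rw [Complex.log, Complex.log, norm_neg, arg_neg_eq_arg_sub_pi_of_im_pos him']
    push_cast; ring
  · have harg : w.arg = Real.pi := by
      rw [Complex.arg_eq_pi_iff]; exact ⟨hre, him'.symm⟩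
    have harg2 : (-w).arg = 0 := by
      rw [Complex.arg_eq_zero_iff]
      refine ⟨by simp only [neg_re]; linarith, by simp only [neg_im, ← him', neg_zero]⟩
    rw [Complex.log, Complex.log, norm_neg, harg, harg2]
    push_cast; ring

lemma sqBr_neg {a : ℝ} (ha0 : 0 < a) {ζ : ℂ}
    (hζ : ζ.im < -Real.sqrt (2 * cOf a)) :
    sqBr a (-ζ) = - sqBr a ζ := by
  set s : ℝ := Real.sqrt (2 * cOf a) with hs
  have hc0 : 0 < 2 * cOf a := by have := cOf_pos ha0; linarith
  have hs0 : 0 < s := Real.sqrt_pos.mpr hc0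
  set w0 : ℂ := -I * ζ with hw0
  set wA : ℂ := w0 + (s:ℂ) with hwA
  set wB : ℂ := w0 - (s:ℂ) with hwB
  have hw0re : w0.re = ζ.im := by simp [hw0]
  have hw0im : w0.im = -ζ.re := by simp [hw0]
  have hAre : wA.re < 0 := by simp [hwA, hw0re]; linarith
  have hBre : wB.re < 0 := by simp [hwB, hw0re]; linarith
  have hAim : wA.im = -ζ.re := by simp [hwA, hw0im]
  have hBim : wB.im = -ζ.re := by simp [hwB, hw0im]
  have hAeq : -I * (ζ + I * (s:ℂ)) = wA := by
    rw [hwA, hw0]; linear_combination (-(s:ℂ)) * Complex.I_mul_I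
  have hBeq : -I * (ζ - I * (s:ℂ)) = wB := by
    rw [hwB, hw0]; linear_combination ((s:ℂ)) * Complex.I_mul_I
  have hAeq' : -I * (-ζ + I * (s:ℂ)) = -wB := by
    rw [hwB, hw0]; linear_combination (-(s:ℂ)) * Complex.I_mul_I
  have hBeq' : -I * (-ζ - I * (s:ℂ)) = -wA := by
    rw [hwA, hw0]; linear_combination ((s:ℂ)) * Complex.I_mul_I
  rw [sqBr, sqBr, Lbr, Lbr, Lbr, Lbr, ← hs, hAeq, hBeq, hAeq', hBeq']
  rcases le_or_gt ζ.re 0 with hre | hre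
  · have hlogA : Complex.log (-wA) = Complex.log wA - Real.pi * I :=
      log_neg_of_re_neg_im_nonneg hAre (by rw [hAim]; linarith)
    have hlogB : Complex.log (-wB) = Complex.log wB - Real.pi * I :=
      log_neg_of_re_neg_im_nonneg hBre (by rw [hBim]; linarith)
    rw [hlogA, hlogB]
    rw [show (1/2:ℂ) * ((Complex.log wB - (Real.pi:ℂ) * I) + I * ((Real.pi:ℂ)/2)) +
        (1/2:ℂ) * ((Complex.log wA - (Real.pi:ℂ) * I) + I * ((Real.pi:ℂ)/2)) =
        ((1/2:ℂ) * (Complex.log wA + I * ((Real.pi:ℂ)/2)) +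
         (1/2:ℂ) * (Complex.log wB + I * ((Real.pi:ℂ)/2))) + (Real.pi:ℂ) * (-1) * I
        by ring]
    rw [Complex.exp_add]
    rw [show ((Real.pi:ℂ) * (-1) * I) = (((-Real.pi : ℝ)):ℂ) * I by push_cast; ring]
    rw [Complex.exp_mul_I, ← Complex.ofReal_cos, ← Complex.ofReal_sin]
    simp
  · have hlogA : Complex.log (-wA) = Complex.log wA + Real.pi * I :=
      log_neg_of_im_neg' (by rw [hAim]; linarith)
    have hlogB : Complex.log (-wB) = Complex.log wB + Real.pi * I :=
      log_neg_of_im_neg' (by rw [hBim]; linarith)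
    rw [hlogA, hlogB]
    rw [show (1/2:ℂ) * ((Complex.log wB + (Real.pi:ℂ) * I) + I * ((Real.pi:ℂ)/2)) +
        (1/2:ℂ) * ((Complex.log wA + (Real.pi:ℂ) * I) + I * ((Real.pi:ℂ)/2)) =
        ((1/2:ℂ) * (Complex.log wA + I * ((Real.pi:ℂ)/2)) +
         (1/2:ℂ) * (Complex.log wB + I * ((Real.pi:ℂ)/2))) + (Real.pi:ℂ) * I
        by ring]
    rw [Complex.exp_add]
    rw [show ((Real.pi:ℂ) * I) = (((Real.pi : ℝ)):ℂ) * I from rfl]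
    rw [Complex.exp_mul_I, ← Complex.ofReal_cos, ← Complex.ofReal_sin]
    simp

lemma Qf_neg {a : ℝ} (ζ : ℂ) : Qf a (-ζ) = - Qf a ζ := by
  rw [Qf, Qf, neg_pow]
  ring_nf

lemma sqBr_eq_Q {a : ℝ} (ha0 : 0 < a) {ζ : ℂ}
    (hζ : Real.sqrt (2 * cOf a) < ζ.im ∨ ζ.im < -Real.sqrt (2 * cOf a)) :
    sqBr a ζ = Qf a ζ := by
  rcases hζ with h | h
  · exact sqBr_eq_Q_upper ha0 h
  · have h1 := sqBr_neg ha0 h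
    have h2 : sqBr a (-ζ) = Qf a (-ζ) := by
      apply sqBr_eq_Q_upper ha0
      simp only [neg_im]
      linarith
    rw [Qf_neg] at h2
    have : sqBr a ζ = - sqBr a (-ζ) := by rw [h1]; ring
    rw [this, h2]; ring


noncomputable def uf (a : ℝ) (ζ : ℂ) : ℂ := 1 + ((2 * cOf a : ℝ) : ℂ) / ζ ^ 2

noncomputable def Rf (a : ℝ) (ζ : ℂ) : ℂ :=
  Complex.exp (-((1/2 : ℂ) * Complex.log (uf a ζ)))

lemma Qf_eq (a : ℝ) (ζ : ℂ) :
    Qf a ζ = ζ * Complex.exp ((1/2 : ℂ) * Complex.log (uf a ζ)) := rfl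

lemma Rf_ne_zero (a : ℝ) (ζ : ℂ) : Rf a ζ ≠ 0 := Complex.exp_ne_zero _

lemma Rf_sq {a : ℝ} {ζ : ℂ} (h : uf a ζ ≠ 0) :
    Rf a ζ ^ 2 * uf a ζ = 1 := by
  rw [Rf, sq, ← Complex.exp_add]
  rw [show -((1/2 : ℂ) * Complex.log (uf a ζ)) + -((1/2 : ℂ) * Complex.log (uf a ζ))
      = -Complex.log (uf a ζ) by ring]
  rw [Complex.exp_neg, Complex.exp_log h]
  exact inv_mul_cancel₀ h

lemma Qf_mul_Rf (a : ℝ) (ζ : ℂ) : Qf a ζ * Rf a ζ = ζ := by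
  rw [Qf_eq, Rf, mul_assoc, ← Complex.exp_add, add_neg_cancel, Complex.exp_zero, mul_one]

lemma uf_mem_slitPlane {a : ℝ} (ha0 : 0 < a) {ζ : ℂ}
    (h : 2 * cOf a < ζ.im ^ 2) : uf a ζ ∈ Complex.slitPlane := by
  have hc0 : 0 < 2 * cOf a := by have := cOf_pos ha0; linarith
  have him : ζ.im ≠ 0 := by
    intro h0; rw [h0] at h; simp at h; linarith
  have hζ : ζ ≠ 0 := by intro h0; rw [h0] at him; simp at him
  have hζ2 : ζ^2 ≠ 0 := pow_ne_zero _ hζ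
  rw [Complex.mem_slitPlane_iff]
  by_cases hre : ζ.re = 0
  · left
    have hζ2eq : ζ^2 = ((-(ζ.im^2) : ℝ) : ℂ) := by
      set y := ζ.im with hy
      have hz : ζ = Complex.I * (y : ℂ) := by
        rw [Complex.ext_iff]; simp [hre, hy]
      rw [hz, mul_pow, Complex.I_sq]
      push_cast; ring
    have him2 : (0:ℝ) < ζ.im^2 := by positivity
    have : uf a ζ = (((1 - 2 * cOf a/ζ.im^2) : ℝ) : ℂ) := by
      rw [uf, hζ2eq]
      push_cast
      rw [div_neg]
      ring
    rw [this]
    simp only [Complex.ofReal_re]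
    have : 2 * cOf a / ζ.im^2 < 1 := (div_lt_one him2).mpr h
    linarith
  · right
    have him2 : (ζ^2).im = 2 * ζ.re * ζ.im := by
      rw [sq]; simp [Complex.mul_im]; ring
    have hζ2im : (ζ^2).im ≠ 0 := by
      rw [him2]
      exact mul_ne_zero (mul_ne_zero two_ne_zero hre) him
    have : (uf a ζ).im = (2 * cOf a) * ((ζ^2)⁻¹).im := by
      simp [uf, div_eq_mul_inv, Complex.add_im, Complex.mul_im]
    rw [this, Complex.inv_im]
    apply mul_ne_zero (by positivity)
    apply div_ne_zero (neg_ne_zero.mpr hζ2im)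
    exact (Complex.normSq_pos.mpr hζ2).ne'

lemma hasDerivAt_uf (a : ℝ) {ζ : ℂ} (hζ : ζ ≠ 0) :
    HasDerivAt (uf a) (((2 * cOf a : ℝ) : ℂ) * (-(2*ζ) / (ζ^2)^2)) ζ := by
  have h1 : HasDerivAt (fun z : ℂ => z^2) (2*ζ) ζ := by
    simpa using hasDerivAt_pow 2 ζ
  have h2 := (h1.inv (pow_ne_zero 2 hζ)).const_mul ((2 * cOf a : ℝ) : ℂ)
  have h3 := h2.const_add (1:ℂ)
  have : (fun z : ℂ => 1 + ((2 * cOf a : ℝ) : ℂ) * (z^2)⁻¹) = uf a := by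
    funext z; rw [uf, div_eq_mul_inv]
  rw [← this]
  exact h3

lemma hasDerivAt_Rf {a : ℝ} {ζ : ℂ} (hζ : ζ ≠ 0)
    (hs : uf a ζ ∈ Complex.slitPlane) :
    HasDerivAt (Rf a) (((2 * cOf a : ℝ) : ℂ) * Rf a ζ^3 / ζ^3) ζ := by
  have hu : uf a ζ ≠ 0 := Complex.slitPlane_ne_zero hs
  have hlog := (hasDerivAt_uf a hζ).clog hs
  have h := (((hlog.const_mul (1/2 : ℂ)).neg).cexp : HasDerivAt (Rf a) _ ζ)
  refine h.congr_deriv ?_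
  simp only [Pi.neg_apply]
  have hr2 := Rf_sq hu
  have hE' : Complex.exp (-((1/2 : ℂ) * Complex.log (uf a ζ))) = Rf a ζ := rfl
  rw [hE']
  field_simp
  linear_combination (-((2 * cOf a : ℝ) : ℂ) * Rf a ζ) * hr2

lemma hasDerivAt_Qf {a : ℝ} {ζ : ℂ} (hζ : ζ ≠ 0)
    (hs : uf a ζ ∈ Complex.slitPlane) :
    HasDerivAt (Qf a) (Rf a ζ) ζ := by
  have hu : uf a ζ ≠ 0 := Complex.slitPlane_ne_zero hs
  have hlog := (hasDerivAt_uf a hζ).clog hs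
  have hE := (hlog.const_mul (1/2 : ℂ)).cexp
  have h := (hasDerivAt_id ζ).mul hE
  have heq : (fun z : ℂ => id z * Complex.exp ((1/2 : ℂ) * Complex.log (uf a z))) = Qf a := by
    funext z; rw [Qf_eq]; rfl
  rw [← heq]
  refine h.congr_deriv ?_
  have hr2 := Rf_sq hu
  have hRinv : Complex.exp ((1/2 : ℂ) * Complex.log (uf a ζ)) * Rf a ζ = 1 := by
    rw [Rf, ← Complex.exp_add, add_neg_cancel, Complex.exp_zero]
  set E := Complex.exp ((1/2 : ℂ) * Complex.log (uf a ζ)) with hEdef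
  set r := Rf a ζ with hrdef
  have h1 : r * uf a ζ = E := by
    calc r * uf a ζ = (E * r) * (r * uf a ζ) := by rw [hRinv, one_mul]
      _ = E * (r^2 * uf a ζ) := by ring
      _ = E := by rw [hr2, mul_one]
  have huζ : uf a ζ * ζ^2 = ζ^2 + ((2 * cOf a : ℝ):ℂ) := by
    rw [uf]; field_simp
  rw [← h1]
  simp only [id_eq]
  field_simp
  push_cast at huζ ⊢
  linear_combination r * huζ


noncomputable def Gt (a : ℝ) (ω : ℂ) : ℂ :=
  (ω - Qf a ω) / ((Real.sqrt (2 * cOf a) : ℝ) : ℂ)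

noncomputable def gt (a ξ : ℝ) (ω : ℂ) : ℂ :=
  Lbr ω - (ξ : ℂ) * Lbr (Gt a ω) + (ξ : ℂ) * L3 (Gt a ω⁻¹)

noncomputable def phi (a ξ : ℝ) (ω : ℂ) : ℂ :=
  (1 + (ξ:ℂ) * Rf a ω + (ξ:ℂ) * Rf a ω⁻¹) / ω

noncomputable def psi (a ξ : ℝ) (ω : ℂ) : ℂ :=
  (((ξ:ℂ) * (((2 * cOf a : ℝ):ℂ) * Rf a ω^3 / ω^3) +
    (ξ:ℂ) * ((((2 * cOf a : ℝ):ℂ) * Rf a ω⁻¹^3 / (ω⁻¹)^3) * (-(ω^2)⁻¹))) * ω -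
   (1 + (ξ:ℂ) * Rf a ω + (ξ:ℂ) * Rf a ω⁻¹) * 1) / ω^2

lemma hasDerivAt_Gt {a : ℝ} {ζ : ℂ} (hζ : ζ ≠ 0)
    (hs : uf a ζ ∈ Complex.slitPlane) :
    HasDerivAt (Gt a) ((1 - Rf a ζ)/((Real.sqrt (2 * cOf a) : ℝ) : ℂ)) ζ := by
  have h := ((hasDerivAt_id' (x := ζ)).sub (hasDerivAt_Qf hζ hs)).div_const
    (((Real.sqrt (2 * cOf a) : ℝ) : ℂ))
  have hGt_eq : Gt a = fun z => (z - Qf a z)/((Real.sqrt (2 * cOf a) : ℝ) : ℂ) := rfl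
  rw [hGt_eq]
  exact h

lemma hasDerivAt_gt {a ξ : ℝ} (ha0 : 0 < a) {ω : ℂ} (hω : ω ≠ 0)
    (h1 : uf a ω ∈ Complex.slitPlane) (h2 : uf a ω⁻¹ ∈ Complex.slitPlane)
    (h3 : (-I * ω) ∈ Complex.slitPlane)
    (h4 : (-I * Gt a ω) ∈ Complex.slitPlane)
    (h5 : (-(Gt a ω⁻¹)) ∈ Complex.slitPlane) :
    HasDerivAt (gt a ξ) (phi a ξ ω) ω := by
  have hc0 : 0 < 2 * cOf a := by have := cOf_pos ha0; linarith
  set s : ℂ := ((Real.sqrt (2 * cOf a) : ℝ) : ℂ) with hsdef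
  have hsne : s ≠ 0 := by
    rw [hsdef]
    exact_mod_cast (Real.sqrt_pos.mpr hc0).ne'
  clear_value s
  have hωinv : ω⁻¹ ≠ 0 := inv_ne_zero hω
  have hGne : Gt a ω ≠ 0 := by
    intro h0
    have := Complex.slitPlane_ne_zero h4
    rw [h0, mul_zero] at this
    exact this rfl
  have hG1ne : Gt a ω⁻¹ ≠ 0 := by
    intro h0
    have := Complex.slitPlane_ne_zero h5
    rw [h0, neg_zero] at this
    exact this rfl
  have hQR := Qf_mul_Rf a ω
  have hQR1 := Qf_mul_Rf a ω⁻¹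
  have hQR1' : Qf a ω⁻¹ * Rf a ω⁻¹ * ω = 1 := by
    rw [hQR1]; exact inv_mul_cancel₀ hω
  -- term 1
  have hT1 : HasDerivAt (fun z : ℂ => Complex.log (-I * z) + I*((Real.pi:ℂ)/2)) (ω⁻¹) ω := by
    have hi : HasDerivAt (fun z : ℂ => -I * z) (-I) ω := by
      simpa using (hasDerivAt_id ω).const_mul (-I)
    have h := (hi.clog h3).add_const (I*((Real.pi:ℂ)/2))
    refine h.congr_deriv ?_
    field_simp
  -- term 2
  have hG := hasDerivAt_Gt hω h1
  have hT2 : HasDerivAt (fun z : ℂ => Complex.log (-I * Gt a z) + I*((Real.pi:ℂ)/2))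
      (-(Rf a ω)/ω) ω := by
    have hinner := hG.const_mul (-I)
    have h := (hinner.clog h4).add_const (I*((Real.pi:ℂ)/2))
    refine h.congr_deriv ?_
    have hGval : Gt a ω = (ω - Qf a ω)/s := by rw [hsdef]; rfl
    have hωQ : ω - Qf a ω ≠ 0 := by
      intro h0; apply hGne; rw [hGval, h0, zero_div]
    rw [← hsdef, mul_div_mul_left _ _ (neg_ne_zero.mpr Complex.I_ne_zero), hGval,
      div_div_div_cancel_right₀ hsne]
    rw [eq_comm, div_eq_div_iff hω hωQ]
    linear_combination hQR
  -- term 3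
  have hG1 := hasDerivAt_Gt hωinv h2
  have hGinv : HasDerivAt (fun z : ℂ => Gt a z⁻¹)
      (((1 - Rf a ω⁻¹)/s) * (-(ω^2)⁻¹)) ω := by
    have h := hG1.comp ω (hasDerivAt_inv hω)
    rw [← hsdef] at h
    exact h
  have hT3 : HasDerivAt (fun z : ℂ => Complex.log (-(Gt a z⁻¹)) + I*(Real.pi:ℂ))
      (Rf a ω⁻¹/ω) ω := by
    have h := ((hGinv.neg).clog h5).add_const (I*(Real.pi:ℂ))
    refine h.congr_deriv ?_
    simp only [Pi.neg_apply]
    have hGval : Gt a ω⁻¹ = (ω⁻¹ - Qf a ω⁻¹)/s := by rw [hsdef]; rfl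
    have hωQ : ω⁻¹ - Qf a ω⁻¹ ≠ 0 := by
      intro h0; apply hG1ne; rw [hGval, h0, zero_div]
    set w := ω⁻¹ with hwdef
    have hw : ω * w = 1 := mul_inv_cancel₀ hω
    clear_value w
    rw [hGval]
    rw [mul_neg, neg_neg, div_neg, div_mul_eq_mul_div, div_div_div_cancel_right₀ hsne,
      ← neg_div]
    rw [div_eq_iff hωQ, div_eq_mul_inv (Rf a w), ← inv_pow, ← hwdef]
    linear_combination w * hQR1
  -- combine
  have hsum := (hT1.sub (hT2.const_mul (ξ:ℂ))).add (hT3.const_mul (ξ:ℂ))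
  have hfun : gt a ξ = fun z : ℂ =>
      ((Complex.log (-I * z) + I*((Real.pi:ℂ)/2)) -
       (ξ:ℂ) * (Complex.log (-I * Gt a z) + I*((Real.pi:ℂ)/2))) +
      (ξ:ℂ) * (Complex.log (-(Gt a z⁻¹)) + I*(Real.pi:ℂ)) := rfl
  rw [hfun]
  refine hsum.congr_deriv ?_
  rw [phi]
  field_simp
  ring

lemma hasDerivAt_phi {a ξ : ℝ} {ω : ℂ} (hω : ω ≠ 0)
    (h1 : uf a ω ∈ Complex.slitPlane) (h2 : uf a ω⁻¹ ∈ Complex.slitPlane) :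
    HasDerivAt (phi a ξ) (psi a ξ ω) ω := by
  have hR := hasDerivAt_Rf hω h1
  have hR1' : HasDerivAt (fun z : ℂ => Rf a z⁻¹)
      ((((2 * cOf a : ℝ):ℂ) * Rf a ω⁻¹^3/(ω⁻¹)^3) * (-(ω^2)⁻¹)) ω := by
    exact (hasDerivAt_Rf (inv_ne_zero hω) h2).comp ω (hasDerivAt_inv hω)
  have hN := ((hR.const_mul (ξ:ℂ)).const_add 1).add (hR1'.const_mul (ξ:ℂ))
  have h := hN.div (hasDerivAt_id' (x := ω)) hω
  have hphi_eq : phi a ξ = fun z : ℂ =>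
      (1 + (ξ:ℂ) * Rf a z + (ξ:ℂ) * Rf a z⁻¹) / z := rfl
  rw [hphi_eq]
  simp only [psi]
  exact h


-- evaluation helpers
lemma cexp_real_mul_log {r x : ℝ} (hx : 0 < x) :
    Complex.exp ((r:ℂ) * Complex.log ((x : ℝ):ℂ)) = ((Real.exp (r * Real.log x) : ℝ) : ℂ) := by
  rw [← Complex.ofReal_log hx.le, Complex.ofReal_exp, ← Complex.ofReal_mul,
    Complex.ofReal_mul]

lemma cexp_half_log {x : ℝ} (hx : 0 < x) :
    Complex.exp ((1/2:ℂ) * Complex.log ((x : ℝ):ℂ))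
      = ((Real.exp (1/2 * Real.log x) : ℝ) : ℂ) := by
  have h := cexp_real_mul_log (r := 1/2) hx
  rw [show ((1/2:ℝ):ℂ) = (1/2:ℂ) by norm_num] at h
  exact h

lemma cexp_neg_half_log {x : ℝ} (hx : 0 < x) :
    Complex.exp (-((1/2:ℂ) * Complex.log ((x : ℝ):ℂ)))
      = ((Real.exp (-(1/2 * Real.log x)) : ℝ) : ℂ) := by
  have h := cexp_real_mul_log (r := -(1/2)) hx
  rw [show ((-(1/2):ℝ):ℂ) = (-(1/2):ℂ) by norm_num] at h
  rw [show -((1/2:ℂ) * Complex.log ((x : ℝ):ℂ)) = -(1/2:ℂ) * Complex.log ((x : ℝ):ℂ) by ring]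
  rw [show (-(1/2 * Real.log x)) = -(1/2) * Real.log x by ring]
  exact h

lemma uf_at_I {a u : ℝ} (hu : u ≠ 0) :
    uf a (I * (u:ℂ)) = ((1 - 2 * cOf a / u^2 : ℝ) : ℂ) := by
  have hI : (I * (u:ℂ))^2 = -((u:ℂ)^2) := by
    rw [mul_pow, I_sq]; ring
  rw [uf, hI]
  have hu' : ((u:ℝ):ℂ) ≠ 0 := Complex.ofReal_ne_zero.mpr hu
  push_cast
  field_simp
  ring

lemma uf_at_I_inv {a u : ℝ} (hu : u ≠ 0) :
    uf a ((I * (u:ℂ))⁻¹) = ((1 - 2 * cOf a * u^2 : ℝ) : ℂ) := by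
  have hI : (I * (u:ℂ))^2 = -((u:ℂ)^2) := by
    rw [mul_pow, I_sq]; ring
  rw [uf, inv_pow, hI]
  have hu' : ((u:ℝ):ℂ) ≠ 0 := Complex.ofReal_ne_zero.mpr hu
  push_cast
  field_simp
  ring

noncomputable def rY (a u : ℝ) : ℝ := Real.exp (-(1/2 * Real.log (1 - 2 * cOf a / u^2)))
noncomputable def rX (a u : ℝ) : ℝ := Real.exp (-(1/2 * Real.log (1 - 2 * cOf a * u^2)))

lemma rY_pos (a u : ℝ) : 0 < rY a u := Real.exp_pos _
lemma rX_pos (a u : ℝ) : 0 < rX a u := Real.exp_pos _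

lemma Rf_at_I {a u : ℝ} (hu : u ≠ 0) (hY : 0 < 1 - 2 * cOf a / u^2) :
    Rf a (I * (u:ℂ)) = ((rY a u : ℝ) : ℂ) := by
  rw [Rf, uf_at_I hu, cexp_neg_half_log hY, rY]

lemma Rf_at_I_inv {a u : ℝ} (hu : u ≠ 0) (hX : 0 < 1 - 2 * cOf a * u^2) :
    Rf a ((I * (u:ℂ))⁻¹) = ((rX a u : ℝ) : ℂ) := by
  rw [Rf, uf_at_I_inv hu, cexp_neg_half_log hX, rX]

lemma Qf_at_I {a u : ℝ} (hu : u ≠ 0) (hY : 0 < 1 - 2 * cOf a / u^2) :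
    Qf a (I * (u:ℂ)) = I * (u:ℂ) * ((Real.exp (1/2 * Real.log (1 - 2 * cOf a / u^2)) : ℝ) : ℂ) := by
  rw [Qf_eq, uf_at_I hu, cexp_half_log hY]

lemma Qf_at_I_inv {a u : ℝ} (hu : u ≠ 0) (hX : 0 < 1 - 2 * cOf a * u^2) :
    Qf a ((I * (u:ℂ))⁻¹) = (I * (u:ℂ))⁻¹ * ((Real.exp (1/2 * Real.log (1 - 2 * cOf a * u^2)) : ℝ) : ℂ) := by
  rw [Qf_eq, uf_at_I_inv hu, cexp_half_log hX]


lemma I_mul_ne_zero {u : ℝ} (hu : u ≠ 0) : I * (u:ℂ) ≠ 0 :=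
  mul_ne_zero Complex.I_ne_zero (Complex.ofReal_ne_zero.mpr hu)

lemma phi_at_I {a ξ u : ℝ} (hu : u ≠ 0) (hY : 0 < 1 - 2*cOf a/u^2)
    (hX : 0 < 1 - 2*cOf a*u^2) :
    phi a ξ (I*(u:ℂ)) = ((1 + ξ * rY a u + ξ * rX a u : ℝ) : ℂ) / (I * (u:ℂ)) := by
  rw [phi, Rf_at_I hu hY, Rf_at_I_inv hu hX]
  push_cast
  ring

lemma psi_at_I {a ξ u : ℝ} (hu : u ≠ 0) (hY : 0 < 1 - 2*cOf a/u^2)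
    (hX : 0 < 1 - 2*cOf a*u^2)
    (hnum : 1 + ξ * rY a u + ξ * rX a u = 0) :
    psi a ξ (I*(u:ℂ)) = ((2 * cOf a * ξ * ((rY a u)^3/u^4 - (rX a u)^3) : ℝ) : ℂ) := by
  have hu' : ((u:ℝ):ℂ) ≠ 0 := Complex.ofReal_ne_zero.mpr hu
  have h3 : (I*(u:ℂ))^3 = -I * (u:ℂ)^3 := by
    linear_combination ((u:ℂ)^3 * I) * Complex.I_sq
  have h2 : (I*(u:ℂ))^2 = -((u:ℂ)^2) := by
    linear_combination ((u:ℂ)^2) * Complex.I_sq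
  have hinv : (I*(u:ℂ))⁻¹ = -I * ((u:ℂ))⁻¹ := by
    rw [mul_inv, Complex.inv_I]
  have hinv3 : ((I*(u:ℂ))⁻¹)^3 = I * ((u:ℂ)⁻¹)^3 := by
    rw [hinv]
    linear_combination (-(((u:ℂ)⁻¹)^3 * I)) * Complex.I_sq
  have hnum' : (1:ℂ) + (ξ:ℂ) * ((rY a u:ℝ):ℂ) + (ξ:ℂ) * ((rX a u:ℝ):ℂ) = 0 := by
    exact_mod_cast congrArg (fun x : ℝ => (x:ℂ)) hnum
  rw [psi, Rf_at_I hu hY, Rf_at_I_inv hu hX, hnum', hinv3, h3, h2]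
  push_cast
  field_simp
  ring_nf

lemma gxi_eq_gt_eventually {a ξ : ℝ} (ha0 : 0 < a) {u : ℝ}
    (hs : Real.sqrt (2*cOf a) < u) (hsu : u * Real.sqrt (2*cOf a) < 1) :
    gxi a ξ =ᶠ[𝓝 (I * (u:ℂ))] gt a ξ := by
  have hc0 : 0 < 2 * cOf a := by have := cOf_pos ha0; linarith
  have hs0 : 0 < Real.sqrt (2*cOf a) := Real.sqrt_pos.mpr hc0
  have hu0 : 0 < u := lt_trans hs0 hs
  have hne : I * (u:ℂ) ≠ 0 := I_mul_ne_zero hu0.ne'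
  have him : (I * (u:ℂ)).im = u := by simp
  have h1 : ∀ᶠ ω : ℂ in 𝓝 (I*(u:ℂ)), Real.sqrt (2*cOf a) < ω.im := by
    have hop : IsOpen {z : ℂ | Real.sqrt (2*cOf a) < z.im} :=
      isOpen_lt continuous_const Complex.continuous_im
    exact hop.eventually_mem (by simp only [Set.mem_setOf_eq, him]; exact hs)
  have hcont : ContinuousAt (fun ω : ℂ => (ω⁻¹).im) (I*(u:ℂ)) :=
    Complex.continuous_im.continuousAt.comp (continuousAt_inv₀ hne)
  have hval : ((I*(u:ℂ))⁻¹).im = -u⁻¹ := by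
    rw [mul_inv, Complex.inv_I]
    simp
  have h2 : ∀ᶠ ω : ℂ in 𝓝 (I*(u:ℂ)), (ω⁻¹).im < -Real.sqrt (2*cOf a) := by
    have hlt : ((I*(u:ℂ))⁻¹).im < -Real.sqrt (2*cOf a) := by
      rw [hval, neg_lt_neg_iff, show (u⁻¹:ℝ) = 1/u by ring, lt_div_iff₀ hu0]
      linarith [hsu]
    exact hcont.eventually_mem (isOpen_Iio.mem_nhds hlt)
  filter_upwards [h1, h2] with ω hω1 hω2
  rw [gxi, gt]
  have e1 : Gbr a ω = Gt a ω := by rw [Gbr, Gt, sqBr_eq_Q ha0 (Or.inl hω1)]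
  have e2 : Gbr a ω⁻¹ = Gt a ω⁻¹ := by rw [Gbr, Gt, sqBr_eq_Q ha0 (Or.inr hω2)]
  rw [e1, e2]


lemma hY_of {a u : ℝ} (ha0 : 0 < a) (hs : Real.sqrt (2*cOf a) < u) :
    0 < 1 - 2*cOf a/u^2 := by
  have hc0 : 0 < 2*cOf a := by have := cOf_pos ha0; linarith
  have hs0 : 0 < Real.sqrt (2*cOf a) := Real.sqrt_pos.mpr hc0
  have hu0 : 0 < u := lt_trans hs0 hs
  have hss := Real.sq_sqrt hc0.le
  have h2 : 2*cOf a < u^2 := by nlinarith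
  have : 2*cOf a/u^2 < 1 := (div_lt_one (by positivity)).mpr h2
  linarith

lemma hX_of {a u : ℝ} (ha0 : 0 < a) (hu0 : 0 < u)
    (hsu : u * Real.sqrt (2*cOf a) < 1) :
    0 < 1 - 2*cOf a*u^2 := by
  have hc0 : 0 < 2*cOf a := by have := cOf_pos ha0; linarith
  have hs0 : 0 < Real.sqrt (2*cOf a) := Real.sqrt_pos.mpr hc0
  have hss := Real.sq_sqrt hc0.le
  nlinarith [mul_pos hu0 hs0]

lemma uf_slit_at_I {a u : ℝ} (hu0 : 0 < u) (hY : 0 < 1 - 2*cOf a/u^2) :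
    uf a (I*(u:ℂ)) ∈ Complex.slitPlane := by
  rw [uf_at_I hu0.ne', Complex.mem_slitPlane_iff]
  left; rw [Complex.ofReal_re]; exact hY

lemma uf_slit_at_I_inv {a u : ℝ} (hu0 : 0 < u) (hX : 0 < 1 - 2*cOf a*u^2) :
    uf a ((I*(u:ℂ))⁻¹) ∈ Complex.slitPlane := by
  rw [uf_at_I_inv hu0.ne', Complex.mem_slitPlane_iff]
  left; rw [Complex.ofReal_re]; exact hX

lemma good_eventually {a : ℝ} (ha0 : 0 < a) {u : ℝ}
    (hs : Real.sqrt (2*cOf a) < u) (hsu : u * Real.sqrt (2*cOf a) < 1) :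
    ∀ᶠ ω : ℂ in 𝓝 (I*(u:ℂ)), (ω ≠ 0 ∧ uf a ω ∈ Complex.slitPlane ∧
      uf a ω⁻¹ ∈ Complex.slitPlane ∧ (-I*ω) ∈ Complex.slitPlane ∧
      (-I * Gt a ω) ∈ Complex.slitPlane ∧ (-(Gt a ω⁻¹)) ∈ Complex.slitPlane) := by
  have hc0 : 0 < 2*cOf a := by have := cOf_pos ha0; linarith
  have hs0 : 0 < Real.sqrt (2*cOf a) := Real.sqrt_pos.mpr hc0
  have hu0 : 0 < u := lt_trans hs0 hs
  have hne : I * (u:ℂ) ≠ 0 := I_mul_ne_zero hu0.ne'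
  have hne' : (I * (u:ℂ))⁻¹ ≠ 0 := inv_ne_zero hne
  have hY := hY_of ha0 hs
  have hX := hX_of ha0 hu0 hsu
  have m1 := uf_slit_at_I (a := a) hu0 hY
  have m2 := uf_slit_at_I_inv (a := a) hu0 hX
  have m3 : -I * (I*(u:ℂ)) ∈ Complex.slitPlane := by
    rw [show -I*(I*(u:ℂ)) = ((u:ℝ):ℂ) by linear_combination (-(u:ℂ)) * Complex.I_sq]
    rw [Complex.mem_slitPlane_iff]; left; simpa using hu0
  -- value of Gt at I*u
  set eY := Real.exp (1/2 * Real.log (1 - 2*cOf a/u^2)) with heY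
  have heY1 : eY < 1 := by
    rw [heY, Real.exp_lt_one_iff]
    have : Real.log (1 - 2*cOf a/u^2) < 0 := by
      apply Real.log_neg hY
      have : 0 < 2*cOf a/u^2 := by positivity
      linarith
    linarith
  have hGval : Gt a (I*(u:ℂ)) = I * ((u*(1-eY)/Real.sqrt (2*cOf a) : ℝ):ℂ) := by
    rw [Gt, Qf_at_I hu0.ne' hY, ← heY]
    push_cast
    field_simp
  have m4 : -I * Gt a (I*(u:ℂ)) ∈ Complex.slitPlane := by
    rw [hGval, show -I*(I*(((u*(1-eY)/Real.sqrt (2*cOf a)):ℝ):ℂ)) =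
        (((u*(1-eY)/Real.sqrt (2*cOf a)):ℝ):ℂ) by
      linear_combination (-((((u*(1-eY)/Real.sqrt (2*cOf a)):ℝ):ℂ))) * Complex.I_sq]
    rw [Complex.mem_slitPlane_iff]; left
    simp only [Complex.ofReal_re]
    exact div_pos (mul_pos hu0 (by linarith)) hs0
  set eX := Real.exp (1/2 * Real.log (1 - 2*cOf a*u^2)) with heX
  have heX1 : eX < 1 := by
    rw [heX, Real.exp_lt_one_iff]
    have hlog : Real.log (1 - 2*cOf a*u^2) < 0 := by
      apply Real.log_neg hX
      have : 0 < 2*cOf a*u^2 := by positivity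
      linarith
    linarith
  have hIinv : (I*(u:ℂ))⁻¹ = -I * ((u⁻¹ : ℝ):ℂ) := by
    rw [mul_inv, Complex.inv_I]
    push_cast
    ring
  have hGval2 : Gt a ((I*(u:ℂ))⁻¹) = -I * (((u⁻¹*(1-eX)/Real.sqrt (2*cOf a)):ℝ):ℂ) := by
    rw [Gt, Qf_at_I_inv hu0.ne' hX, ← heX, hIinv]
    push_cast
    field_simp
    ring
  have m5 : -(Gt a ((I*(u:ℂ))⁻¹)) ∈ Complex.slitPlane := by
    have hr : (0:ℝ) < u⁻¹*(1-eX)/Real.sqrt (2*cOf a) :=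
      div_pos (mul_pos (inv_pos.mpr hu0) (by linarith)) hs0
    have hrw : -(-I * (((u⁻¹*(1-eX)/Real.sqrt (2*cOf a)):ℝ):ℂ)) =
        I * (((u⁻¹*(1-eX)/Real.sqrt (2*cOf a)):ℝ):ℂ) := by ring
    rw [hGval2, hrw, Complex.mem_slitPlane_iff]
    right
    simp only [Complex.mul_im, Complex.I_re, Complex.I_im, Complex.ofReal_re,
      Complex.ofReal_im, zero_mul, one_mul, mul_zero, add_zero, zero_add]
    exact hr.ne'
  -- continuity
  have hufc : ∀ z : ℂ, z ≠ 0 → ContinuousAt (uf a) z := by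
    intro z hz
    exact continuousAt_const.add (continuousAt_const.div
      ((continuous_pow 2).continuousAt) (pow_ne_zero 2 hz))
  have ev1 : ∀ᶠ ω : ℂ in 𝓝 (I*(u:ℂ)), ω ≠ 0 := eventually_ne_nhds hne
  have ev2 := (hufc _ hne).eventually_mem (Complex.isOpen_slitPlane.mem_nhds m1)
  have ev3 : ∀ᶠ ω : ℂ in 𝓝 (I*(u:ℂ)), uf a ω⁻¹ ∈ Complex.slitPlane := by
    have hcont : ContinuousAt (fun ω : ℂ => uf a ω⁻¹) (I*(u:ℂ)) :=
      (hufc _ hne').comp (continuousAt_inv₀ hne)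
    exact hcont.eventually_mem (Complex.isOpen_slitPlane.mem_nhds m2)
  have ev4 : ∀ᶠ ω : ℂ in 𝓝 (I*(u:ℂ)), (-I*ω) ∈ Complex.slitPlane := by
    have hcont : ContinuousAt (fun ω : ℂ => -I*ω) (I*(u:ℂ)) :=
      continuousAt_const.mul continuousAt_id
    exact hcont.eventually_mem (Complex.isOpen_slitPlane.mem_nhds m3)
  have hGc : ContinuousAt (Gt a) (I*(u:ℂ)) :=
    (hasDerivAt_Gt hne m1).differentiableAt.continuousAt
  have ev5 : ∀ᶠ ω : ℂ in 𝓝 (I*(u:ℂ)), (-I * Gt a ω) ∈ Complex.slitPlane := by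
    have hcont : ContinuousAt (fun ω : ℂ => -I * Gt a ω) (I*(u:ℂ)) :=
      continuousAt_const.mul hGc
    exact hcont.eventually_mem (Complex.isOpen_slitPlane.mem_nhds m4)
  have hGc2 : ContinuousAt (Gt a) ((I*(u:ℂ))⁻¹) :=
    (hasDerivAt_Gt hne' m2).differentiableAt.continuousAt
  have ev6 : ∀ᶠ ω : ℂ in 𝓝 (I*(u:ℂ)), (-(Gt a ω⁻¹)) ∈ Complex.slitPlane := by
    have hcont : ContinuousAt (fun ω : ℂ => -(Gt a ω⁻¹)) (I*(u:ℂ)) :=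
      (hGc2.comp (continuousAt_inv₀ hne)).neg
    exact hcont.eventually_mem (Complex.isOpen_slitPlane.mem_nhds m5)
  filter_upwards [ev1, ev2, ev3, ev4, ev5, ev6] with ω h1 h2 h3 h4 h5 h6
  exact ⟨h1, h2, h3, h4, h5, h6⟩

lemma deriv_gxi_eventually {a ξ : ℝ} (ha0 : 0 < a) {u : ℝ}
    (hs : Real.sqrt (2*cOf a) < u) (hsu : u * Real.sqrt (2*cOf a) < 1) :
    deriv (gxi a ξ) =ᶠ[𝓝 (I*(u:ℂ))] phi a ξ := by
  refine ((gxi_eq_gt_eventually ha0 hs hsu).deriv).trans ?_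
  filter_upwards [good_eventually ha0 hs hsu] with ω h
  exact (hasDerivAt_gt ha0 h.1 h.2.1 h.2.2.1 h.2.2.2.1 h.2.2.2.2.1 h.2.2.2.2.2).deriv

lemma rY_inv {a u : ℝ} (hu : u ≠ 0) : rY a u⁻¹ = rX a u := by
  rw [rY, rX]
  congr 3
  rw [div_eq_mul_inv, inv_pow, inv_inv]

lemma rX_inv {a u : ℝ} (hu : u ≠ 0) : rX a u⁻¹ = rY a u := by
  rw [rX, rY]
  congr 3
  rw [div_eq_mul_inv, inv_pow]

lemma key_ineq {a t : ℝ} (ha0 : 0 < a) (ha1 : a < 1)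
    (ht1 : Real.sqrt (2*cOf a) < t) (ht2 : t < 1) :
    t^4 * (rX a t)^3 < (rY a t)^3 := by
  have hc0 : 0 < 2*cOf a := by have := cOf_pos ha0; linarith
  have hc1 : 2*cOf a < 1 := two_cOf_lt_one ha0 ha1
  have hs0 : 0 < Real.sqrt (2*cOf a) := Real.sqrt_pos.mpr hc0
  have ht0 : 0 < t := lt_trans hs0 ht1
  have hss := Real.sq_sqrt hc0.le
  have hd : 0 < t^2 - 2*cOf a := by nlinarith
  have hX : 0 < 1 - 2*cOf a*t^2 := by nlinarith
  have hY : 0 < 1 - 2*cOf a/t^2 := hY_of ha0 ht1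
  have e1 : (rX a t)^3 = Real.exp ((3:ℕ) * -(1/2 * Real.log (1 - 2*cOf a*t^2))) := by
    rw [rX, ← Real.exp_nat_mul]
  have e2 : (rY a t)^3 = Real.exp ((3:ℕ) * -(1/2 * Real.log (1 - 2*cOf a/t^2))) := by
    rw [rY, ← Real.exp_nat_mul]
  have e3 : t^4 = Real.exp ((4:ℕ) * Real.log t) := by
    rw [Real.exp_nat_mul, Real.exp_log ht0]
  rw [e1, e2, e3, ← Real.exp_add, Real.exp_lt_exp]
  push_cast
  have hYeq : 1 - 2*cOf a/t^2 = (t^2 - 2*cOf a)/t^2 := by field_simp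
  have hlogY : Real.log (1 - 2*cOf a/t^2)
      = Real.log (t^2 - 2*cOf a) - Real.log (t^2) := by
    rw [hYeq, Real.log_div hd.ne' (by positivity)]
  have hXd : t^2 - 2*cOf a < 1 - 2*cOf a*t^2 := by
    nlinarith [mul_pos (show (0:ℝ) < 1 - t^2 by nlinarith) hc0]
  have hpoly : t^2*(t^2 - 2*cOf a)^3 < (1 - 2*cOf a*t^2)^3 := by
    have h1 : (t^2 - 2*cOf a)^3 < (1 - 2*cOf a*t^2)^3 := by
      exact pow_lt_pow_left₀ hXd hd.le (by norm_num)
    have h2 : 0 < (1 - t^2) * (t^2 - 2*cOf a)^3 :=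
      mul_pos (by nlinarith) (pow_pos hd 3)
    nlinarith
  have hlog := Real.log_lt_log (by positivity) hpoly
  rw [Real.log_mul (by positivity) (pow_ne_zero 3 hd.ne'), Real.log_pow, Real.log_pow, Real.log_pow] at hlog
  have hlt2 : Real.log (t^2) = 2*Real.log t := by
    rw [show t^2 = t^2 from rfl, Real.log_pow]
    push_cast; ring
  rw [hlt2] at hlogY
  push_cast at hlog
  linarith

end St7

/-- Let `-(1/2)√(1-2c) < ξ < 0` and suppose `ω_c ∈ i·(√(2c), 1)`
satisfies `g_ξ′(ω_c) = 0`. Then `g_ξ′(-1/ω_c) = 0`; moreover `g_ξ″(ω_c)` is a negative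
real number and `g_ξ″(-1/ω_c)` is a positive real number. -/
theorem statement7 (a : ℝ) (ha0 : 0 < a) (ha1 : a < 1) (ξ : ℝ)
    (hξl : -(1 / 2) * Real.sqrt (1 - 2 * cOf a) < ξ) (hξ0 : ξ < 0)
    (t : ℝ) (ht1 : Real.sqrt (2 * cOf a) < t) (ht2 : t < 1)
    (hcrit : deriv (gxi a ξ) (Complex.I * (t : ℂ)) = 0) :
    deriv (gxi a ξ) (-(Complex.I * (t : ℂ))⁻¹) = 0 ∧
    (∃ r : ℝ, r < 0 ∧ iteratedDeriv 2 (gxi a ξ) (Complex.I * (t : ℂ)) = (r : ℂ)) ∧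
    (∃ r : ℝ, 0 < r ∧ iteratedDeriv 2 (gxi a ξ) (-(Complex.I * (t : ℂ))⁻¹) = (r : ℂ)) := by
  have hc0 : 0 < 2 * cOf a := by have := St7.cOf_pos ha0; linarith
  have hs0 : 0 < Real.sqrt (2 * cOf a) := Real.sqrt_pos.mpr hc0
  have hc1 : 2 * cOf a < 1 := St7.two_cOf_lt_one ha0 ha1
  have hs1 : Real.sqrt (2 * cOf a) < 1 := by
    nlinarith [Real.sq_sqrt hc0.le, Real.sqrt_nonneg (2*cOf a)]
  have ht0 : 0 < t := lt_trans hs0 ht1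
  have hsu : t * Real.sqrt (2*cOf a) < 1 := by nlinarith
  have hY := St7.hY_of ha0 ht1
  have hX := St7.hX_of ha0 ht0 hsu
  have hne : Complex.I * (t:ℂ) ≠ 0 := St7.I_mul_ne_zero ht0.ne'
  have hev1 := St7.deriv_gxi_eventually (ξ := ξ) ha0 ht1 hsu
  have hderiv1 : deriv (gxi a ξ) (Complex.I*(t:ℂ)) = St7.phi a ξ (Complex.I*(t:ℂ)) :=
    hev1.eq_of_nhds
  have hnum0 : 1 + ξ*St7.rY a t + ξ*St7.rX a t = 0 := by
    have h0 := hcrit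
    rw [hderiv1, St7.phi_at_I ht0.ne' hY hX] at h0
    rcases div_eq_zero_iff.mp h0 with h | h
    · exact_mod_cast h
    · exact absurd h hne
  have hs1' : Real.sqrt (2*cOf a) < t⁻¹ := by
    rw [show (t⁻¹:ℝ) = 1/t by ring, lt_div_iff₀ ht0]
    linarith [hsu]
  have hsu' : t⁻¹ * Real.sqrt (2*cOf a) < 1 := by
    rw [inv_mul_eq_div, div_lt_one ht0]
    exact ht1
  have hti0 : 0 < t⁻¹ := inv_pos.mpr ht0
  have hY' := St7.hY_of ha0 hs1'
  have hX' := St7.hX_of ha0 hti0 hsu'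
  have hne' : Complex.I * ((t⁻¹:ℝ):ℂ) ≠ 0 := St7.I_mul_ne_zero hti0.ne'
  have hpt : -(Complex.I*(t:ℂ))⁻¹ = Complex.I * ((t⁻¹:ℝ):ℂ) := by
    rw [mul_inv, Complex.inv_I]
    push_cast
    ring
  have hnum0' : 1 + ξ*St7.rY a t⁻¹ + ξ*St7.rX a t⁻¹ = 0 := by
    rw [St7.rY_inv ht0.ne', St7.rX_inv ht0.ne']
    linarith [hnum0]
  have hev2 := St7.deriv_gxi_eventually (ξ := ξ) ha0 hs1' hsu'
  have hkey := St7.key_ineq ha0 ha1 ht1 ht2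
  refine ⟨?_, ?_, ?_⟩
  · rw [hpt, hev2.eq_of_nhds, St7.phi_at_I hti0.ne' hY' hX']
    rw [show ((1 + ξ*St7.rY a t⁻¹ + ξ*St7.rX a t⁻¹ : ℝ):ℂ) = 0 by exact_mod_cast hnum0']
    simp
  · refine ⟨2*cOf a*ξ*((St7.rY a t)^3/t^4 - (St7.rX a t)^3), ?_, ?_⟩
    · have hpos : 0 < (St7.rY a t)^3/t^4 - (St7.rX a t)^3 := by
        rw [sub_pos, lt_div_iff₀ (by positivity)]
        linarith [hkey]
      exact mul_neg_of_neg_of_pos (mul_neg_of_pos_of_neg hc0 hξ0) hpos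
    · rw [show (2:ℕ) = 1+1 from rfl, iteratedDeriv_succ, iteratedDeriv_one]
      rw [hev1.deriv_eq]
      rw [(St7.hasDerivAt_phi hne (St7.uf_slit_at_I ht0 hY)
        (St7.uf_slit_at_I_inv ht0 hX)).deriv]
      exact St7.psi_at_I ht0.ne' hY hX hnum0
  · refine ⟨2*cOf a*ξ*((St7.rY a t⁻¹)^3/(t⁻¹)^4 - (St7.rX a t⁻¹)^3), ?_, ?_⟩
    · rw [St7.rY_inv ht0.ne', St7.rX_inv ht0.ne']
      have heq : (St7.rX a t)^3/(t⁻¹)^4 = t^4*(St7.rX a t)^3 := by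
        rw [div_eq_mul_inv, inv_pow, inv_inv]; ring
      rw [heq]
      have hneg : t^4*(St7.rX a t)^3 - (St7.rY a t)^3 < 0 := by linarith
      exact mul_pos_of_neg_of_neg (mul_neg_of_pos_of_neg hc0 hξ0) hneg
    · rw [hpt, show (2:ℕ) = 1+1 from rfl, iteratedDeriv_succ, iteratedDeriv_one]
      rw [hev2.deriv_eq]
      rw [(St7.hasDerivAt_phi hne' (St7.uf_slit_at_I hti0 hY')
        (St7.uf_slit_at_I_inv hti0 hX')).deriv]
      exact St7.psi_at_I hti0.ne' hY' hX' hnum0'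
end

section
/- For every ξ ∈ ℝ, the function g_ξ has a double critical point at ω = i, i.e. g_ξ′(i) = 0 and g_ξ″(i) = 0, if and only if ξ = -(1/2)√(1-2c). -/
open Complex

namespace S8


lemma exp_Lbr {z : ℂ} (hz : z ≠ 0) : Complex.exp (Lbr z) = z := by
  rw [Lbr, Complex.exp_add, Complex.exp_log (by simpa using hz)]
  have h : Complex.exp (I * (↑Real.pi / 2)) = I := by
    rw [mul_comm, Complex.exp_mul_I]
    simp
  rw [h]; ring_nf; rw [Complex.I_sq]; ring

lemma hasDerivAt_Lbr {z : ℂ} (hz : (-I*z) ∈ Complex.slitPlane) : HasDerivAt Lbr z⁻¹ z := by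
  have hz0 : z ≠ 0 := by
    intro h; rw [h, mul_zero] at hz; exact Complex.slitPlane_ne_zero hz rfl
  have h1 : HasDerivAt (fun w : ℂ => -I * w) (-I) z := by
    simpa using (hasDerivAt_id z).const_mul (-I)
  have h2 := (Complex.hasDerivAt_log hz).comp z h1
  have h3 : (-I*z)⁻¹ * (-I) = z⁻¹ := by
    field_simp
  have h4 := h2.add_const (I * ((Real.pi : ℂ) / 2))
  rw [h3] at h4
  exact h4

lemma hasDerivAt_L3 {z : ℂ} (hz : (-z) ∈ Complex.slitPlane) : HasDerivAt L3 z⁻¹ z := by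
  have hz0 : z ≠ 0 := by
    intro h; rw [h, neg_zero] at hz; exact Complex.slitPlane_ne_zero hz rfl
  have h1 : HasDerivAt (fun w : ℂ => -w) (-1) z := (hasDerivAt_id z).neg
  have h2 := (Complex.hasDerivAt_log hz).comp z h1
  have h3 : (-z)⁻¹ * (-1) = z⁻¹ := by field_simp
  have h4 := h2.add_const (I * (Real.pi : ℂ))
  rw [h3] at h4
  exact h4

lemma log_neg_of_im_nonpos {w : ℂ} (hw : 0 < w.re) (him : w.im ≤ 0) :
    Complex.log (-w) = Complex.log w + Real.pi * I := by
  have harg : Complex.arg (-w) = Complex.arg w + Real.pi := by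
    rcases him.lt_or_eq with h | h
    · exact Complex.arg_neg_eq_arg_add_pi_of_im_neg h
    · have h0 : Complex.arg w = 0 := Complex.arg_eq_zero_iff.2 ⟨hw.le, h⟩
      rw [h0, zero_add]
      exact Complex.arg_eq_pi_iff.2 ⟨by simpa using hw, by simpa using h⟩
  have e1 : Complex.log (-w) = Real.log (‖-w‖) + Complex.arg (-w) * I :=
    Complex.ext (by simp [Complex.log_re]) (by simp [Complex.log_im])
  have e2 : Complex.log w = Real.log (‖w‖) + Complex.arg w * I :=
    Complex.ext (by simp [Complex.log_re]) (by simp [Complex.log_im])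
  rw [e1, harg, norm_neg, e2]; push_cast; ring

lemma log_neg_of_im_pos {w : ℂ} (him : 0 < w.im) :
    Complex.log (-w) = Complex.log w - Real.pi * I := by
  have harg : Complex.arg (-w) = Complex.arg w - Real.pi :=
    Complex.arg_neg_eq_arg_sub_pi_of_im_pos him
  have e1 : Complex.log (-w) = Real.log (‖-w‖) + Complex.arg (-w) * I :=
    Complex.ext (by simp [Complex.log_re]) (by simp [Complex.log_im])
  have e2 : Complex.log w = Real.log (‖w‖) + Complex.arg w * I :=
    Complex.ext (by simp [Complex.log_re]) (by simp [Complex.log_im])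
  rw [e1, harg, norm_neg, e2]; push_cast; ring

lemma sqrt_eq_exp_half_log {x : ℝ} (hx : 0 < x) : Real.sqrt x = Real.exp (Real.log x / 2) := by
  rw [Real.exp_half, Real.exp_log hx]


lemma sqBr_ne_zero (a : ℝ) (ω : ℂ) : sqBr a ω ≠ 0 := Complex.exp_ne_zero _

lemma sqBr_sq {a : ℝ} (hc : 0 ≤ cOf a) {ω : ℂ}
    (h1 : ω + I * (Real.sqrt (2 * cOf a) : ℂ) ≠ 0)
    (h2 : ω - I * (Real.sqrt (2 * cOf a) : ℂ) ≠ 0) :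
    (sqBr a ω) ^ 2 = ω ^ 2 + 2 * (cOf a : ℂ) := by
  set s : ℝ := Real.sqrt (2 * cOf a) with hs
  have hs2 : (s : ℂ)^2 = 2 * (cOf a : ℂ) := by
    have h : s^2 = 2 * cOf a := Real.sq_sqrt (by linarith)
    exact_mod_cast h
  rw [sqBr, sq, ← Complex.exp_add]
  have : (1 / 2 : ℂ) * Lbr (ω + I*s) + (1/2) * Lbr (ω - I*s) +
      ((1 / 2 : ℂ) * Lbr (ω + I*s) + (1/2) * Lbr (ω - I*s)) =
      Lbr (ω + I*s) + Lbr (ω - I*s) := by ring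
  rw [this, Complex.exp_add, exp_Lbr h1, exp_Lbr h2]
  have hI : (I:ℂ)^2 = -1 := Complex.I_sq
  linear_combination (-(s:ℂ)^2) * hI + hs2

lemma hasDerivAt_sqBr {a : ℝ} (hc : 0 ≤ cOf a) {ω : ℂ}
    (him : Real.sqrt (2 * cOf a) < ω.im) :
    HasDerivAt (sqBr a) (ω / sqBr a ω) ω := by
  set s : ℝ := Real.sqrt (2 * cOf a) with hs
  have hs0 : 0 ≤ s := Real.sqrt_nonneg _
  have him1 : 0 < (ω + I*(s:ℂ)).im := by simp [Complex.add_im, Complex.mul_im]; nlinarith [him]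
  have him2 : 0 < (ω - I*(s:ℂ)).im := by simp [Complex.sub_im, Complex.mul_im]; nlinarith [him]
  have h1 : ω + I*(s:ℂ) ≠ 0 := fun h => by rw [h] at him1; simp at him1
  have h2 : ω - I*(s:ℂ) ≠ 0 := fun h => by rw [h] at him2; simp at him2
  have hsp1 : (-I*(ω + I*(s:ℂ))) ∈ Complex.slitPlane := by
    rw [Complex.mem_slitPlane_iff]; left; simpa using him1
  have hsp2 : (-I*(ω - I*(s:ℂ))) ∈ Complex.slitPlane := by
    rw [Complex.mem_slitPlane_iff]; left; simpa using him2
  have d1 : HasDerivAt (fun w : ℂ => Lbr (w + I*(s:ℂ))) (ω + I*(s:ℂ))⁻¹ ω := by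
    have := (hasDerivAt_Lbr hsp1).comp ω ((hasDerivAt_id ω).add_const (I*(s:ℂ)))
    simp only [mul_one] at this
    exact this
  have d2 : HasDerivAt (fun w : ℂ => Lbr (w - I*(s:ℂ))) (ω - I*(s:ℂ))⁻¹ ω := by
    have := (hasDerivAt_Lbr hsp2).comp ω ((hasDerivAt_id ω).sub_const (I*(s:ℂ)))
    simp only [mul_one] at this
    exact this
  have du : HasDerivAt (fun w : ℂ => (1/2:ℂ) * Lbr (w + I*(s:ℂ)) + (1/2:ℂ) * Lbr (w - I*(s:ℂ)))
      ((1/2:ℂ) * (ω + I*(s:ℂ))⁻¹ + (1/2:ℂ) * (ω - I*(s:ℂ))⁻¹) ω :=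
    (d1.const_mul _).add (d2.const_mul _)
  have dS := du.cexp
  have hval : Complex.exp ((1/2:ℂ) * Lbr (ω + I*(s:ℂ)) + (1/2:ℂ) * Lbr (ω - I*(s:ℂ))) = sqBr a ω := rfl
  rw [hval] at dS
  have hS0 := sqBr_ne_zero a ω
  have hS2 : (sqBr a ω)^2 = (ω + I*(s:ℂ)) * (ω - I*(s:ℂ)) := by
    rw [sqBr_sq hc h1 h2]
    have hs2 : (s : ℂ)^2 = 2 * (cOf a : ℂ) := by
      have h : s^2 = 2 * cOf a := Real.sq_sqrt (by linarith)
      exact_mod_cast h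
    have hI : (I:ℂ)^2 = -1 := Complex.I_sq
    linear_combination (s:ℂ)^2 * hI - hs2
  have : sqBr a ω * ((1/2:ℂ) * (ω + I*(s:ℂ))⁻¹ + (1/2:ℂ) * (ω - I*(s:ℂ))⁻¹) = ω / sqBr a ω := by
    rw [eq_div_iff hS0]
    field_simp
    linear_combination (2*ω)*hS2
  rw [this] at dS
  exact dS

noncomputable def Wf (a : ℝ) (ω : ℂ) : ℂ :=
  Complex.exp ((1/2 : ℂ) * Complex.log (1 + 2*(cOf a : ℂ)*ω^2))

noncomputable def Pf (a : ℝ) (ω : ℂ) : ℂ :=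
  Complex.exp ((1/2 : ℂ) * Complex.log (I*ω⁻¹ - (Real.sqrt (2*cOf a) : ℂ)) +
    (1/2 : ℂ) * Complex.log (I*ω⁻¹ + (Real.sqrt (2*cOf a) : ℂ)))

noncomputable def Qf (a : ℝ) (ω : ℂ) : ℂ := -I * ω * Pf a ω

lemma Wf_ne_zero (a : ℝ) (ω : ℂ) : Wf a ω ≠ 0 := Complex.exp_ne_zero _

lemma exp_I_pi_div_two : Complex.exp (I * ((Real.pi : ℂ)/2)) = I := by
  rw [mul_comm, Complex.exp_mul_I]; simp

lemma Wf_sq {a : ℝ} {ω : ℂ} (h : 1 + 2*(cOf a:ℂ)*ω^2 ≠ 0) :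
    (Wf a ω)^2 = 1 + 2*(cOf a:ℂ)*ω^2 := by
  rw [Wf, sq, ← Complex.exp_add]
  rw [show (1/2 : ℂ) * Complex.log (1 + 2*(cOf a : ℂ)*ω^2) +
      (1/2 : ℂ) * Complex.log (1 + 2*(cOf a : ℂ)*ω^2) =
      Complex.log (1 + 2*(cOf a : ℂ)*ω^2) from by ring]
  rw [Complex.exp_log h]

lemma hasDerivAt_Wf {a : ℝ} {ω : ℂ} (h : (1 + 2*(cOf a:ℂ)*ω^2) ∈ Complex.slitPlane) :
    HasDerivAt (Wf a) (2*(cOf a:ℂ)*ω / Wf a ω) ω := by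
  have h0 : 1 + 2*(cOf a:ℂ)*ω^2 ≠ 0 := Complex.slitPlane_ne_zero h
  have d0 : HasDerivAt (fun w : ℂ => 1 + 2*(cOf a:ℂ)*w^2) (2*(cOf a:ℂ)*(2*ω)) ω := by
    have := ((hasDerivAt_pow 2 ω).const_mul (2*(cOf a:ℂ))).const_add 1
    simpa [mul_comm, mul_assoc, mul_left_comm] using this
  have d2 := ((d0.clog h).const_mul (1/2 : ℂ)).cexp
  have hW0 := Wf_ne_zero a ω
  have hW2 := Wf_sq h0
  refine d2.congr_deriv ?_
  rw [show Complex.exp ((1/2:ℂ) * Complex.log (1 + 2*(cOf a:ℂ)*ω^2)) = Wf a ω from rfl]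
  rw [← hW2]
  field_simp

lemma sqBr_inv_eq {a : ℝ} (hc : 0 ≤ cOf a) {ω : ℂ} (hω : ω ≠ 0)
    (h1 : 0 < (I*ω⁻¹ - (Real.sqrt (2*cOf a) : ℂ)).re)
    (h2 : 0 < (I*ω⁻¹ + (Real.sqrt (2*cOf a) : ℂ)).re)
    (h5 : 1 + 2*(cOf a:ℂ)*ω^2 ≠ 0) (h6 : Qf a ω + Wf a ω ≠ 0) :
    sqBr a ω⁻¹ = Wf a ω / ω := by
  set s : ℝ := Real.sqrt (2 * cOf a) with hs
  have hs2 : (s : ℂ)^2 = 2 * (cOf a : ℂ) := by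
    have h : s^2 = 2 * cOf a := Real.sq_sqrt (by linarith)
    exact_mod_cast h
  set w₁ : ℂ := I*ω⁻¹ - (s:ℂ) with hw₁
  set w₂ : ℂ := I*ω⁻¹ + (s:ℂ) with hw₂
  have hw₁0 : w₁ ≠ 0 := fun h => by rw [h] at h1; simp at h1
  have hw₂0 : w₂ ≠ 0 := fun h => by rw [h] at h2; simp at h2
  have him : w₁.im = w₂.im := by simp [hw₁, hw₂]
  have e₁ : -I * (ω⁻¹ + I*(s:ℂ)) = -w₁ := by
    rw [hw₁]; ring_nf; rw [Complex.I_sq]; ring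
  have e₂ : -I * (ω⁻¹ - I*(s:ℂ)) = -w₂ := by
    rw [hw₂]; ring_nf; rw [Complex.I_sq]; ring
  have hstep_a : sqBr a ω⁻¹ = -I * Pf a ω := by
    rw [sqBr, Lbr, Lbr, e₁, e₂, Pf]
    rcases le_or_gt w₁.im 0 with him1 | him1
    · rw [log_neg_of_im_nonpos h1 him1, log_neg_of_im_nonpos h2 (him ▸ him1)]
      rw [show ((1/2 : ℂ) * (Complex.log w₁ + Real.pi * I + I * ((Real.pi:ℂ)/2)) +
          (1/2 : ℂ) * (Complex.log w₂ + Real.pi * I + I * ((Real.pi:ℂ)/2))) =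
          ((1/2 : ℂ) * Complex.log w₁ + (1/2 : ℂ) * Complex.log w₂) +
            ((Real.pi:ℂ)*I + I*((Real.pi:ℂ)/2)) from by ring]
      rw [Complex.exp_add, Complex.exp_add, Complex.exp_add, Complex.exp_pi_mul_I, exp_I_pi_div_two]
      ring
    · rw [log_neg_of_im_pos him1, log_neg_of_im_pos (him ▸ him1)]
      rw [show ((1/2 : ℂ) * (Complex.log w₁ - Real.pi * I + I * ((Real.pi:ℂ)/2)) +
          (1/2 : ℂ) * (Complex.log w₂ - Real.pi * I + I * ((Real.pi:ℂ)/2))) =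
          ((1/2 : ℂ) * Complex.log w₁ + (1/2 : ℂ) * Complex.log w₂) +
            (-(I*((Real.pi:ℂ)/2))) from by ring]
      rw [Complex.exp_add, Complex.exp_neg, exp_I_pi_div_two, Complex.inv_I]
      ring
  have hP2 : (Pf a ω)^2 = w₁ * w₂ := by
    rw [Pf, sq, ← Complex.exp_add]
    rw [show ((1/2 : ℂ) * Complex.log w₁ + (1/2 : ℂ) * Complex.log w₂ +
        ((1/2 : ℂ) * Complex.log w₁ + (1/2 : ℂ) * Complex.log w₂)) =
        Complex.log w₁ + Complex.log w₂ from by ring]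
    rw [Complex.exp_add, Complex.exp_log hw₁0, Complex.exp_log hw₂0]
  have hinv : ω * ω⁻¹ = 1 := mul_inv_cancel₀ hω
  have hI : (I:ℂ)^2 = -1 := Complex.I_sq
  have hQ2 : (Qf a ω)^2 = (Wf a ω)^2 := by
    rw [Qf, Wf_sq h5]
    calc (-I*ω*Pf a ω)^2 = I^2 * ω^2 * (w₁*w₂) := by rw [← hP2]; ring
    _ = 1 + 2*(cOf a:ℂ)*ω^2 := by
        rw [hw₁, hw₂]
        linear_combination (-(ω^2*(s:ℂ)^2) + (I^2-1)*ω^2*ω⁻¹^2) * hI + ω^2 * hs2 +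
          (ω*ω⁻¹+1) * hinv
  have hQW : Qf a ω = Wf a ω := by
    have hfac : (Qf a ω - Wf a ω) * (Qf a ω + Wf a ω) = 0 := by linear_combination hQ2
    rcases mul_eq_zero.1 hfac with h | h
    · exact sub_eq_zero.1 h
    · exact absurd h h6
  rw [hstep_a, eq_div_iff hω]
  rw [Qf] at hQW
  linear_combination hQW

noncomputable def gnice (a ξ : ℝ) (ω : ℂ) : ℂ :=
  Lbr ω - (ξ:ℂ) * Lbr (Gbr a ω) +
    (ξ:ℂ) * L3 ((1 - Wf a ω)/((Real.sqrt (2*cOf a) : ℂ) * ω))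

lemma hasDerivAt_gnice (a ξ : ℝ) (hc : 0 < cOf a) {ω : ℂ}
    (himω : Real.sqrt (2*cOf a) < ω.im)
    (hG : 0 < (-I * Gbr a ω).re)
    (hsp5 : (1 + 2*(cOf a:ℂ)*ω^2) ∈ Complex.slitPlane)
    (hW1 : Wf a ω ≠ 1)
    (hH : (-((1 - Wf a ω)/((Real.sqrt (2*cOf a) : ℂ) * ω))) ∈ Complex.slitPlane) :
    HasDerivAt (gnice a ξ) (ω⁻¹ + (ξ:ℂ)/sqBr a ω + (ξ:ℂ)/(ω * Wf a ω)) ω := by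
  set s : ℝ := Real.sqrt (2 * cOf a) with hs
  have hs0 : 0 < s := Real.sqrt_pos.2 (by linarith)
  have hsC : (s:ℂ) ≠ 0 := by exact_mod_cast hs0.ne'
  have himpos : 0 < ω.im := lt_trans hs0 himω
  have hω0 : ω ≠ 0 := fun h => by rw [h] at himpos; simp at himpos
  have hS0 := sqBr_ne_zero a ω
  have hW0 := Wf_ne_zero a ω
  -- term 1
  have t1 : HasDerivAt Lbr ω⁻¹ ω := by
    apply hasDerivAt_Lbr
    rw [Complex.mem_slitPlane_iff]; left; simpa using himpos
  -- term 2
  have dS := hasDerivAt_sqBr hc.le himω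
  have dG : HasDerivAt (Gbr a) ((1 - ω / sqBr a ω)/(s:ℂ)) ω := by
    have := ((hasDerivAt_id ω).sub dS).div_const (s:ℂ)
    exact this
  have hGsp : (-I * Gbr a ω) ∈ Complex.slitPlane := by
    rw [Complex.mem_slitPlane_iff]; left; exact hG
  have hG0 : Gbr a ω ≠ 0 := by
    intro h; rw [h, mul_zero] at hG; simp at hG
  have hωS : ω - sqBr a ω ≠ 0 := by
    intro h; apply hG0; rw [Gbr, h, zero_div]
  have t2 : HasDerivAt (fun w => Lbr (Gbr a w)) (-(sqBr a ω)⁻¹) ω := by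
    have h := (hasDerivAt_Lbr hGsp).comp ω dG
    refine h.congr_deriv ?_
    rw [Gbr, ← hs]
    field_simp
    ring
  -- term 3
  have dW := hasDerivAt_Wf hsp5
  have hW2 := Wf_sq (Complex.slitPlane_ne_zero hsp5)
  have hsω : (s:ℂ) * ω ≠ 0 := mul_ne_zero hsC hω0
  have dD : HasDerivAt (fun w : ℂ => (s:ℂ) * w) (s:ℂ) ω := by
    simpa using (hasDerivAt_id ω).const_mul (s:ℂ)
  have dN : HasDerivAt (fun w : ℂ => 1 - Wf a w) (-(2*(cOf a:ℂ)*ω / Wf a ω)) ω := by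
    have := (hasDerivAt_const ω (1:ℂ)).sub dW
    simp only [zero_sub] at this
    exact this
  have dH := dN.div dD hsω
  have hW1' : 1 - Wf a ω ≠ 0 := fun h => hW1 (by linear_combination -h)
  have hH0 : (1 - Wf a ω)/((s:ℂ) * ω) ≠ 0 := div_ne_zero hW1' hsω
  have t3 : HasDerivAt (fun w => L3 ((1 - Wf a w)/((s:ℂ) * w))) ((ω * Wf a ω)⁻¹) ω := by
    have h := (hasDerivAt_L3 hH).comp ω dH
    refine h.congr_deriv ?_
    field_simp
    ring_nf
    linear_combination hW2
  -- assemble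
  have t := (t1.sub (t2.const_mul (ξ:ℂ))).add (t3.const_mul (ξ:ℂ))
  have : gnice a ξ = fun w => Lbr w - (ξ:ℂ) * Lbr (Gbr a w) +
      (ξ:ℂ) * L3 ((1 - Wf a w)/((s:ℂ) * w)) := rfl
  rw [this]
  refine t.congr_deriv ?_
  field_simp
  ring

lemma exp_half_log {x : ℝ} (hx : 0 < x) :
    Complex.exp ((1/2:ℂ) * Complex.log (x:ℂ)) = (Real.sqrt x : ℂ) := by
  rw [← Complex.ofReal_log hx.le,
    show (1/2:ℂ) * (Real.log x : ℂ) = ((Real.log x / 2 : ℝ) : ℂ) from by push_cast; ring,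
    ← Complex.ofReal_exp, Real.exp_half, Real.exp_log hx]

lemma exp_half_log_two {x y : ℝ} (hx : 0 < x) (hy : 0 < y) :
    Complex.exp ((1/2:ℂ) * Complex.log (x:ℂ) + (1/2:ℂ) * Complex.log (y:ℂ))
      = (Real.sqrt (x*y) : ℂ) := by
  rw [← Complex.ofReal_log hx.le, ← Complex.ofReal_log hy.le,
    show (1/2:ℂ) * (Real.log x : ℂ) + (1/2:ℂ) * (Real.log y : ℂ)
      = (((Real.log x + Real.log y) / 2 : ℝ) : ℂ) from by push_cast; ring,
    ← Complex.ofReal_exp, Real.exp_half, Real.exp_add, Real.exp_log hx, Real.exp_log hy]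

variable {a : ℝ}

lemma sqBr_I (hc0 : 0 < cOf a) (hc1 : 2*cOf a < 1) :
    sqBr a I = I * (Real.sqrt (1 - 2*cOf a) : ℂ) := by
  set s : ℝ := Real.sqrt (2*cOf a) with hsdef
  have hs2 : s^2 = 2*cOf a := Real.sq_sqrt (by linarith)
  have hs0 : 0 < s := Real.sqrt_pos.2 (by linarith)
  have hs1 : s < 1 := by nlinarith
  have e1 : -I * (I + I*(s:ℂ)) = ((1+s:ℝ):ℂ) := by
    push_cast; linear_combination (-(1+(s:ℂ))) * Complex.I_sq
  have e2 : -I * (I - I*(s:ℂ)) = ((1-s:ℝ):ℂ) := by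
    push_cast; linear_combination (-(1-(s:ℂ))) * Complex.I_sq
  rw [sqBr, Lbr, Lbr, e1, e2,
    show (1/2:ℂ) * (Complex.log ((1+s:ℝ):ℂ) + I*((Real.pi:ℂ)/2)) +
        (1/2:ℂ) * (Complex.log ((1-s:ℝ):ℂ) + I*((Real.pi:ℂ)/2)) =
        ((1/2:ℂ) * Complex.log ((1+s:ℝ):ℂ) + (1/2:ℂ) * Complex.log ((1-s:ℝ):ℂ)) +
          I*((Real.pi:ℂ)/2) from by ring,
    Complex.exp_add, exp_half_log_two (by linarith) (by linarith), exp_I_pi_div_two,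
    show (1+s)*(1-s) = 1 - 2*cOf a from by nlinarith]
  ring

lemma Wf_I (hc0 : 0 < cOf a) (hc1 : 2*cOf a < 1) :
    Wf a I = (Real.sqrt (1 - 2*cOf a) : ℂ) := by
  have e : 1 + 2*(cOf a:ℂ)*I^2 = ((1 - 2*cOf a : ℝ):ℂ) := by
    push_cast; linear_combination (2*(cOf a:ℂ)) * Complex.I_sq
  rw [Wf, e, exp_half_log (by linarith)]

lemma Pf_I (hc0 : 0 < cOf a) (hc1 : 2*cOf a < 1) :
    Pf a I = (Real.sqrt (1 - 2*cOf a) : ℂ) := by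
  set s : ℝ := Real.sqrt (2*cOf a) with hsdef
  have hs2 : s^2 = 2*cOf a := Real.sq_sqrt (by linarith)
  have hs0 : 0 < s := Real.sqrt_pos.2 (by linarith)
  have hs1 : s < 1 := by nlinarith
  have hII : (I:ℂ) * I⁻¹ = 1 := mul_inv_cancel₀ I_ne_zero
  have e1 : I * (I:ℂ)⁻¹ - (s:ℂ) = ((1-s:ℝ):ℂ) := by rw [hII]; push_cast; ring
  have e2 : I * (I:ℂ)⁻¹ + (s:ℂ) = ((1+s:ℝ):ℂ) := by rw [hII]; push_cast; ring
  rw [Pf, e1, e2, exp_half_log_two (by linarith) (by linarith),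
    show (1-s)*(1+s) = 1 - 2*cOf a from by nlinarith]

end S8

open S8 Filter

/-- For every `ξ ∈ ℝ`, the function `g_ξ` has a double critical point at
`ω = i`, i.e. `g_ξ′(i) = 0` and `g_ξ″(i) = 0`, if and only if `ξ = -(1/2)√(1-2c)`. -/
theorem statement8 (a : ℝ) (ha0 : 0 < a) (ha1 : a < 1) (ξ : ℝ) :
    (deriv (gxi a ξ) Complex.I = 0 ∧ iteratedDeriv 2 (gxi a ξ) Complex.I = 0) ↔
      ξ = -(1 / 2) * Real.sqrt (1 - 2 * cOf a) := by
  have hc0 : 0 < cOf a := div_pos ha0 (by positivity)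
  have hc1 : 2 * cOf a < 1 := by
    rw [cOf, mul_div_assoc']
    rw [div_lt_one (by positivity)]
    nlinarith
  set s : ℝ := Real.sqrt (2*cOf a) with hsdef
  have hs2 : s^2 = 2*cOf a := Real.sq_sqrt (by linarith)
  have hs0 : 0 < s := Real.sqrt_pos.2 (by linarith)
  have hs1 : s < 1 := by nlinarith
  have hsC : (s:ℂ) ≠ 0 := by exact_mod_cast hs0.ne'
  set r : ℝ := Real.sqrt (1 - 2*cOf a) with hrdef
  have hq0 : (0:ℝ) < 1 - 2*cOf a := by linarith
  have hr2 : r^2 = 1 - 2*cOf a := Real.sq_sqrt hq0.le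
  have hr0 : 0 < r := Real.sqrt_pos.2 hq0
  have hr1 : r < 1 := by nlinarith
  have hrC : (r:ℂ) ≠ 0 := by exact_mod_cast hr0.ne'
  have hI2 : (I:ℂ)^2 = -1 := Complex.I_sq
  have hSI : sqBr a I = I * (r:ℂ) := sqBr_I hc0 hc1
  have hWI : Wf a I = (r:ℂ) := Wf_I hc0 hc1
  have hPI : Pf a I = (r:ℂ) := Pf_I hc0 hc1
  have himI : s < (I:ℂ).im := by simpa using hs1
  -- slitPlane condition for Wf at I
  have hval5 : 1 + 2*(cOf a:ℂ)*(I:ℂ)^2 = ((1 - 2*cOf a : ℝ):ℂ) := by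
    push_cast; linear_combination (2*(cOf a:ℂ)) * hI2
  have hsp5I : (1 + 2*(cOf a:ℂ)*(I:ℂ)^2) ∈ Complex.slitPlane := by
    rw [hval5, Complex.mem_slitPlane_iff]; left; simpa using hq0
  -- continuity facts
  have hcs : ContinuousAt (sqBr a) I := (hasDerivAt_sqBr hc0.le himI).continuousAt
  have hcG : ContinuousAt (Gbr a) I := (continuousAt_id.sub hcs).div_const _
  have hcW : ContinuousAt (Wf a) I := (hasDerivAt_Wf hsp5I).continuousAt
  have hiinv : ContinuousAt (fun ω : ℂ => ω⁻¹) I := continuousAt_inv₀ I_ne_zero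
  have hII : (I:ℂ) * I⁻¹ = 1 := mul_inv_cancel₀ I_ne_zero
  have hw1c : ContinuousAt (fun ω : ℂ => I*ω⁻¹ - (s:ℂ)) I :=
    (continuousAt_const.mul hiinv).sub continuousAt_const
  have hw2c : ContinuousAt (fun ω : ℂ => I*ω⁻¹ + (s:ℂ)) I :=
    (continuousAt_const.mul hiinv).add continuousAt_const
  have hw1v : (I:ℂ)*I⁻¹ - (s:ℂ) = ((1-s:ℝ):ℂ) := by rw [hII]; push_cast; ring
  have hw2v : (I:ℂ)*I⁻¹ + (s:ℂ) = ((1+s:ℝ):ℂ) := by rw [hII]; push_cast; ring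
  have hsp1 : ((I:ℂ)*I⁻¹ - (s:ℂ)) ∈ Complex.slitPlane := by
    rw [hw1v, Complex.mem_slitPlane_iff]; left; simpa using by linarith
  have hsp2 : ((I:ℂ)*I⁻¹ + (s:ℂ)) ∈ Complex.slitPlane := by
    rw [hw2v, Complex.mem_slitPlane_iff]; left; simpa using by linarith
  have hcP : ContinuousAt (Pf a) I := by
    apply ContinuousAt.cexp
    have hlog1 : ContinuousAt (fun ω : ℂ => Complex.log (I*ω⁻¹ - (s:ℂ))) I :=
      ContinuousAt.comp (x := I) (f := fun ω : ℂ => I*ω⁻¹ - (s:ℂ)) (continuousAt_clog hsp1) hw1c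
    have hlog2 : ContinuousAt (fun ω : ℂ => Complex.log (I*ω⁻¹ + (s:ℂ))) I :=
      ContinuousAt.comp (x := I) (f := fun ω : ℂ => I*ω⁻¹ + (s:ℂ)) (continuousAt_clog hsp2) hw2c
    exact (continuousAt_const.mul hlog1).add (continuousAt_const.mul hlog2)
  have hcQW : ContinuousAt (fun ω => Qf a ω + Wf a ω) I :=
    ((continuousAt_const.mul continuousAt_id).mul hcP).add hcW
  -- eventual conditions
  have him_ev : ∀ᶠ ω : ℂ in nhds I, s < ω.im :=
    continuousAt_const.eventually_lt Complex.continuous_im.continuousAt himI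
  have hGIv : -I * Gbr a I = (((1-r)/s : ℝ):ℂ) := by
    rw [Gbr, hSI, ← hsdef]
    push_cast
    field_simp
    linear_combination ((r:ℂ) - 1) * hI2
  have hG_ev : ∀ᶠ ω : ℂ in nhds I, 0 < (-I * Gbr a ω).re := by
    apply continuousAt_const.eventually_lt
      (Complex.continuous_re.continuousAt.comp (continuousAt_const.mul hcG))
    show (0:ℝ) < (-I * Gbr a I).re
    rw [hGIv, Complex.ofReal_re]
    exact div_pos (by linarith) hs0
  have hpc : ContinuousAt (fun ω : ℂ => 1 + 2*(cOf a:ℂ)*ω^2) I := by fun_prop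
  have h5_ev : ∀ᶠ ω : ℂ in nhds I, 0 < (1 + 2*(cOf a:ℂ)*ω^2).re := by
    apply continuousAt_const.eventually_lt (Complex.continuous_re.continuousAt.comp hpc)
    show (0:ℝ) < (1 + 2*(cOf a:ℂ)*(I:ℂ)^2).re
    rw [hval5, Complex.ofReal_re]; exact hq0
  have hW1_ev : ∀ᶠ ω : ℂ in nhds I, Wf a ω ≠ 1 := by
    apply hcW.eventually_ne
    rw [hWI]
    exact_mod_cast hr1.ne
  have hHIv : -((1 - Wf a I)/((s:ℂ) * I)) = I * (((1-r)/s : ℝ):ℂ) := by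
    rw [hWI]; push_cast; field_simp; linear_combination ((r:ℂ)-1) * hI2
  have hcH : ContinuousAt (fun ω : ℂ => -((1 - Wf a ω)/((s:ℂ) * ω))) I := by
    apply ContinuousAt.neg
    exact (continuousAt_const.sub hcW).div (continuousAt_const.mul continuousAt_id)
      (by simpa using mul_ne_zero hsC I_ne_zero)
  have hH_ev : ∀ᶠ ω : ℂ in nhds I, 0 < (-((1 - Wf a ω)/((s:ℂ) * ω))).im := by
    apply continuousAt_const.eventually_lt (Complex.continuous_im.continuousAt.comp hcH)
    show (0:ℝ) < (-((1 - Wf a I)/((s:ℂ) * I))).im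
    rw [hHIv]
    simp only [Complex.mul_im, Complex.I_re, Complex.I_im, Complex.ofReal_re, Complex.ofReal_im]
    have : (0:ℝ) < (1-r)/s := div_pos (by linarith) hs0
    simpa using this
  have hω0_ev : ∀ᶠ ω : ℂ in nhds I, ω ≠ 0 := continuousAt_id.eventually_ne I_ne_zero
  have h1_ev : ∀ᶠ ω : ℂ in nhds I, 0 < (I*ω⁻¹ - (s:ℂ)).re := by
    apply continuousAt_const.eventually_lt (Complex.continuous_re.continuousAt.comp hw1c)
    show (0:ℝ) < ((I:ℂ)*I⁻¹ - (s:ℂ)).re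
    rw [hw1v, Complex.ofReal_re]; linarith
  have h2_ev : ∀ᶠ ω : ℂ in nhds I, 0 < (I*ω⁻¹ + (s:ℂ)).re := by
    apply continuousAt_const.eventually_lt (Complex.continuous_re.continuousAt.comp hw2c)
    show (0:ℝ) < ((I:ℂ)*I⁻¹ + (s:ℂ)).re
    rw [hw2v, Complex.ofReal_re]; linarith
  have hQW_ev : ∀ᶠ ω : ℂ in nhds I, Qf a ω + Wf a ω ≠ 0 := by
    apply hcQW.eventually_ne
    show Qf a I + Wf a I ≠ 0
    rw [Qf, hPI, hWI]
    intro h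
    have : (2*r : ℂ) = 0 := by linear_combination h + (r:ℂ)*hI2
    have : (2*r : ℝ) = 0 := by exact_mod_cast this
    linarith
  -- the eventual identity gxi = gnice
  have hEq : gxi a ξ =ᶠ[nhds I] gnice a ξ := by
    filter_upwards [hω0_ev, h1_ev, h2_ev, h5_ev, hQW_ev] with ω h0 h1 h2 h5 h6
    have h5' : 1 + 2*(cOf a:ℂ)*ω^2 ≠ 0 := by
      intro h; rw [h] at h5; simp at h5
    have hKey := sqBr_inv_eq hc0.le h0 h1 h2 h5' h6
    have hGinv : Gbr a ω⁻¹ = (1 - Wf a ω)/((s:ℂ) * ω) := by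
      rw [Gbr, hKey, ← hsdef]
      field_simp
    simp only [gxi, gnice, hGinv, ← hsdef]
  -- the eventual derivative
  have hDev : ∀ᶠ ω : ℂ in nhds I,
      HasDerivAt (gnice a ξ) (ω⁻¹ + (ξ:ℂ)/sqBr a ω + (ξ:ℂ)/(ω * Wf a ω)) ω := by
    filter_upwards [him_ev, hG_ev, h5_ev, hW1_ev, hH_ev] with ω e1 e2 e3 e4 e5
    apply hasDerivAt_gnice a ξ hc0 e1 e2 ?_ e4 ?_
    · rw [Complex.mem_slitPlane_iff]; left; exact e3
    · rw [Complex.mem_slitPlane_iff]; right; exact e5.ne'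
  set φ : ℂ → ℂ := fun ω => ω⁻¹ + (ξ:ℂ)/sqBr a ω + (ξ:ℂ)/(ω * Wf a ω) with hφdef
  have hd1 : deriv (gxi a ξ) I = φ I := by
    rw [hEq.deriv_eq]
    exact hDev.self_of_nhds.deriv
  have hd2 : iteratedDeriv 2 (gxi a ξ) I = deriv φ I := by
    have hev2 : deriv (gxi a ξ) =ᶠ[nhds I] φ :=
      hEq.deriv.trans (hDev.mono fun ω h => h.deriv)
    rw [show (2:ℕ) = 1 + 1 from rfl, iteratedDeriv_succ, iteratedDeriv_one]
    exact hev2.deriv_eq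
  -- derivative of φ at I
  have hS0I : sqBr a I ≠ 0 := sqBr_ne_zero a I
  have hW0I : Wf a I ≠ 0 := Wf_ne_zero a I
  have dSI : HasDerivAt (sqBr a) (I / sqBr a I) I := hasDerivAt_sqBr hc0.le himI
  have dWI : HasDerivAt (Wf a) (2*(cOf a:ℂ)*I / Wf a I) I := hasDerivAt_Wf hsp5I
  have dinv : HasDerivAt (fun w : ℂ => w⁻¹) (-((I:ℂ)^2)⁻¹) I := hasDerivAt_inv I_ne_zero
  have d2 := (hasDerivAt_const I (ξ:ℂ)).div dSI hS0I
  have dmulI : HasDerivAt (fun w : ℂ => w * Wf a w)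
      (1 * Wf a I + I * (2*(cOf a:ℂ)*I / Wf a I)) I := (hasDerivAt_id I).mul dWI
  have hmul0 : I * Wf a I ≠ 0 := mul_ne_zero I_ne_zero hW0I
  have d3 := (hasDerivAt_const I (ξ:ℂ)).div dmulI hmul0
  have dphi := (dinv.add d2).add d3
  have hd3 : deriv φ I = -((I:ℂ)^2)⁻¹ + (0 * sqBr a I - (ξ:ℂ) * (I / sqBr a I)) / sqBr a I ^ 2 +
      (0 * (I * Wf a I) - (ξ:ℂ) * (1 * Wf a I + I * (2*(cOf a:ℂ)*I / Wf a I))) / (I * Wf a I) ^ 2 :=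
    dphi.deriv
  -- value computations
  have h2cr : 2*(cOf a:ℂ) = 1 - (r:ℂ)^2 := by
    have : (r:ℂ)^2 = ((1 - 2*cOf a : ℝ):ℂ) := by exact_mod_cast congrArg (Complex.ofReal) hr2
    rw [this]; push_cast; ring
  have hvφ : φ I = -I * (1 + 2*(ξ:ℂ)/(r:ℂ)) := by
    rw [hφdef]
    simp only
    rw [hSI, hWI]
    field_simp
    linear_combination ((r:ℂ) + 2*(ξ:ℂ)) * hI2
  have hvφ' : deriv φ I = 1 + 2*(ξ:ℂ)/(r:ℂ) := by
    rw [hd3, hSI, hWI, h2cr]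
    field_simp
    linear_combination (-((r:ℂ)^3 + (ξ:ℂ) + (ξ:ℂ)*(r:ℂ)^2)) * hI2
  rw [hd1, hd2, hvφ, hvφ']
  have hu : (1 + 2*(ξ:ℂ)/(r:ℂ)) = ((1 + 2*ξ/r : ℝ):ℂ) := by push_cast; ring
  constructor
  · rintro ⟨-, hB⟩
    rw [hu] at hB
    have hu0 : (1 + 2*ξ/r : ℝ) = 0 := by exact_mod_cast hB
    have : r + 2*ξ = 0 := by
      field_simp at hu0; linarith
    linarith
  · intro h
    have hu0 : (1 + 2*ξ/r : ℝ) = 0 := by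
      rw [h]; field_simp; norm_num
    constructor
    · rw [hu, hu0]; simp
    · rw [hu, hu0]; simp
end
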